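/- arXiv:1308.2992 — 3 statements merged into one kernel-verified Lean document; each statement's English description precedes it below -/
import Mathlib

section
/- The endomorphism $\varphi'_\mathbf{i}$ of $\mathbb{Z}^m$ defined by $\varphi'_\mathbf{i}(\varepsilon_\ell)=-\sum_{k=1}^{\ell}(w_k^\vee\alpha_{i_k}^\vee,\ w_\ell\omega_{i_\ell})\,\varepsilon_k$ is a two-sided inverse of $\varphi_\mathbf{i}$, i.e. $\varphi'_\mathbf{i}\circ\varphi_\mathbf{i}=\mathrm{id}_{\mathbb{Z}^m}=\varphi_\mathbf{i}\circ\varphi'_\mathbf{i}$. -/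
open Finset

/-- The weight lattice `𝒫`: the free abelian group with basis `{αᵢ, ωᵢ : i ∈ I}`,
represented by pairs of coefficient vectors (first component: coefficients of the `αᵢ`,
second component: coefficients of the `ωᵢ`). -/
abbrev PLat (n : ℕ) := (Fin n → ℤ) × (Fin n → ℤ)

/-- The coroot lattice `𝒬^∨`: the free abelian group with basis `{αᵢ^∨ : i ∈ I}`,
represented by coefficient vectors. -/
abbrev QvLat (n : ℕ) := Fin n → ℤ

variable {n : ℕ}

/-- The basis element `α_j^∨` of `𝒬^∨`. -/
def coroot (j : Fin n) : QvLat n := fun k => if k = j then 1 else 0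

/-- The basis element `α_j` of `𝒫`. -/
def alP (j : Fin n) : PLat n := (fun k => if k = j then 1 else 0, 0)

/-- The basis element `ω_j` of `𝒫`. -/
def omP (j : Fin n) : PLat n := (0, fun k => if k = j then 1 else 0)

/-- The biadditive pairing `𝒬^∨ × 𝒫 → ℤ` with `(αᵢ^∨, α_j) = a_{ij}` and
`(αᵢ^∨, ω_j) = δ_{ij}`. -/
def pairQP (A : Fin n → Fin n → ℤ) (x : QvLat n) (lam : PLat n) : ℤ :=
  (∑ a, ∑ b, x a * A a b * lam.1 b) + ∑ a, x a * lam.2 a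

/-- The simple reflection `sᵢ` on `𝒫`: `sᵢ α_j = α_j - a_{ij} αᵢ`,
`sᵢ ω_j = ω_j - δ_{ij} αᵢ`. -/
def sP (A : Fin n → Fin n → ℤ) (a : Fin n) (lam : PLat n) : PLat n :=
  (fun j => if j = a then lam.1 a - ((∑ k, A a k * lam.1 k) + lam.2 a) else lam.1 j,
   lam.2)

/-- The simple reflection `sᵢ^∨` on `𝒬^∨`: `sᵢ^∨ α_j^∨ = α_j^∨ - a_{ji} αᵢ^∨`. -/
def sQ (A : Fin n → Fin n → ℤ) (a : Fin n) (x : QvLat n) : QvLat n :=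
  fun j => if j = a then x a - ∑ k, A k a * x k else x j

/-- `w_ℓ = s_{i₁} ∘ ⋯ ∘ s_{i_ℓ}` on `𝒫` (with `w₀ = id`). -/
def wP (A : Fin n → Fin n → ℤ) (ii : ℕ → Fin n) : ℕ → PLat n → PLat n
  | 0 => id
  | (l+1) => wP A ii l ∘ sP A (ii (l+1))

/-- `w_ℓ^∨ = s_{i₁}^∨ ∘ ⋯ ∘ s_{i_ℓ}^∨` on `𝒬^∨` (with `w₀ = id`). -/
def wQ (A : Fin n → Fin n → ℤ) (ii : ℕ → Fin n) : ℕ → QvLat n → QvLat n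
  | 0 => id
  | (l+1) => wQ A ii l ∘ sQ A (ii (l+1))

/-- `k⁺ = min({ℓ : k < ℓ ≤ m, i_ℓ = i_k} ∪ {m+1})`. -/
noncomputable def kplus (ii : ℕ → Fin n) (m k : ℕ) : ℕ :=
  sInf ({l | k < l ∧ l ≤ m ∧ ii l = ii k} ∪ {m+1})

/-- `k⁻ = max({ℓ : 1 ≤ ℓ < k, i_ℓ = i_k} ∪ {0})`. -/
noncomputable def kminus (ii : ℕ → Fin n) (k : ℕ) : ℕ :=
  sSup ({l | 1 ≤ l ∧ l < k ∧ ii l = ii k} ∪ {0})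

/-- The standard basis vector `ε_k` of `ℤ^m` (1-based index), with the convention
`ε_s = 0` for `s ∉ {1,…,m}`. -/
def eps (m k : ℕ) : Fin m → ℤ := fun j => if (j : ℕ) + 1 = k then 1 else 0

/-- `φ_𝐢(ε_k) = -ε_k - ε_{k⁻} - ∑_{ℓ : ℓ < k < ℓ⁺} a_{i_ℓ i_k} ε_ℓ`. -/
noncomputable def phiE (A : Fin n → Fin n → ℤ) (ii : ℕ → Fin n) (m k : ℕ) :
    Fin m → ℤ :=
  -(eps m k) - eps m (kminus ii k)
    - ∑ l : Fin m, (if (l:ℕ)+1 < k ∧ k < kplus ii m ((l:ℕ)+1)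
        then A (ii ((l:ℕ)+1)) (ii k) else 0) • eps m ((l:ℕ)+1)

/-- The endomorphism `φ_𝐢` of `ℤ^m`, extended additively from its values on the basis. -/
noncomputable def phiMap (A : Fin n → Fin n → ℤ) (ii : ℕ → Fin n) (m : ℕ)
    (v : Fin m → ℤ) : Fin m → ℤ :=
  ∑ k : Fin m, v k • phiE A ii m ((k:ℕ)+1)

/-- `φ'_𝐢(ε_ℓ) = -∑_{k=1}^{ℓ} (w_k^∨ α_{i_k}^∨, w_ℓ ω_{i_ℓ}) ε_k`. -/
def phiE' (A : Fin n → Fin n → ℤ) (ii : ℕ → Fin n) (m l : ℕ) : Fin m → ℤ :=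
  -∑ k : Fin m, (if (k:ℕ)+1 ≤ l then
      pairQP A (wQ A ii ((k:ℕ)+1) (coroot (ii ((k:ℕ)+1)))) (wP A ii l (omP (ii l)))
    else 0) • eps m ((k:ℕ)+1)

/-- The endomorphism `φ'_𝐢` of `ℤ^m`, extended additively from its values on the basis. -/
def phiMap' (A : Fin n → Fin n → ℤ) (ii : ℕ → Fin n) (m : ℕ)
    (v : Fin m → ℤ) : Fin m → ℤ :=
  ∑ l : Fin m, v l • phiE' A ii m ((l:ℕ)+1)

/-- `∂_𝐢 ε_k = ε_k - ε_{k⁻}`. -/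
noncomputable def derE (ii : ℕ → Fin n) (m k : ℕ) : Fin m → ℤ :=
  eps m k - eps m (kminus ii k)

/-- The endomorphism `∂_𝐢` of `ℤ^m`. -/
noncomputable def derMap (ii : ℕ → Fin n) (m : ℕ) (v : Fin m → ℤ) : Fin m → ℤ :=
  ∑ k : Fin m, v k • derE ii m ((k:ℕ)+1)

/-- `∫_𝐢 ε_k = ε_k + ε_{k⁻} + ε_{(k⁻)⁻} + ⋯` (summing along the chain `k > k⁻ > ⋯ > 0`). -/
noncomputable def intE (ii : ℕ → Fin n) (m : ℕ) (k : ℕ) : Fin m → ℤ :=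
  if h : kminus ii k < k then eps m k + intE ii m (kminus ii k) else eps m k
termination_by k
decreasing_by exact h

/-- The endomorphism `∫_𝐢` of `ℤ^m`. -/
noncomputable def intMap (ii : ℕ → Fin n) (m : ℕ) (v : Fin m → ℤ) : Fin m → ℤ :=
  ∑ k : Fin m, v k • intE ii m ((k:ℕ)+1)

/-- The skew-symmetric biadditive form `Λ_𝐢` on `ℤ^m` with
`Λ_𝐢(ε_k, ε_ℓ) = sgn(k-ℓ) c_{i_k i_ℓ}` where `c_{ij} = dᵢ a_{ij}`. -/
def LamF (A : Fin n → Fin n → ℤ) (d : Fin n → ℤ) (ii : ℕ → Fin n) (m : ℕ)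
    (a b : Fin m → ℤ) : ℤ :=
  ∑ k : Fin m, ∑ l : Fin m, a k * b l *
    ((((k:ℕ):ℤ) - ((l:ℕ):ℤ)).sign *
      (d (ii ((k:ℕ)+1)) * A (ii ((k:ℕ)+1)) (ii ((l:ℕ)+1))))

/-- The biadditive form `Φ_𝐢` on `ℤ^m` with `Φ_𝐢(ε_k,ε_ℓ) = -d_{i_k}` if `k = ℓ`,
`= -c_{i_ℓ i_k}` if `ℓ < k`, and `= 0` if `ℓ > k`. -/
def PhiF (A : Fin n → Fin n → ℤ) (d : Fin n → ℤ) (ii : ℕ → Fin n) (m : ℕ)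
    (a b : Fin m → ℤ) : ℤ :=
  ∑ k : Fin m, ∑ l : Fin m, a k * b l *
    (if (k:ℕ) = (l:ℕ) then -(d (ii ((k:ℕ)+1)))
     else if (l:ℕ) < (k:ℕ) then
       -(d (ii ((l:ℕ)+1)) * A (ii ((l:ℕ)+1)) (ii ((k:ℕ)+1)))
     else 0)

/-- The entry `b_{pk}` of the exchange matrix `B̃_𝐢`. -/
noncomputable def bcoef (A : Fin n → Fin n → ℤ) (ii : ℕ → Fin n) (m p k : ℕ) : ℤ :=
  if p = kminus ii k then -1
  else if p < k ∧ k < kplus ii m p ∧ kplus ii m p < kplus ii m k then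
    -(A (ii p) (ii k))
  else if k < p ∧ p < kplus ii m k ∧ kplus ii m k < kplus ii m p then
    A (ii p) (ii k)
  else if p = kplus ii m k then 1
  else 0

/-- The column `𝐛^k = ∑_p b_{pk} ε_p ∈ ℤ^m` of the exchange matrix. -/
noncomputable def bvec (A : Fin n → Fin n → ℤ) (ii : ℕ → Fin n) (m k : ℕ) :
    Fin m → ℤ :=
  fun p => bcoef A ii m ((p:ℕ)+1) k

/-- `ρ_𝐢⁺(ε_k) = ε_k + ∑_{ℓ<k, ℓ⁺=m+1} a_{i_ℓ i_k} ε_ℓ`. -/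
noncomputable def rhoPE (A : Fin n → Fin n → ℤ) (ii : ℕ → Fin n) (m k : ℕ) :
    Fin m → ℤ :=
  eps m k + ∑ l : Fin m, (if (l:ℕ)+1 < k ∧ kplus ii m ((l:ℕ)+1) = m+1
      then A (ii ((l:ℕ)+1)) (ii k) else 0) • eps m ((l:ℕ)+1)

/-- `ρ_𝐢⁻(ε_k) = ε_k - ∑_{ℓ≤k, ℓ⁺=m+1} a_{i_ℓ i_k} ε_ℓ`. -/
noncomputable def rhoME (A : Fin n → Fin n → ℤ) (ii : ℕ → Fin n) (m k : ℕ) :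
    Fin m → ℤ :=
  eps m k - ∑ l : Fin m, (if (l:ℕ)+1 ≤ k ∧ kplus ii m ((l:ℕ)+1) = m+1
      then A (ii ((l:ℕ)+1)) (ii k) else 0) • eps m ((l:ℕ)+1)

/-- The endomorphism `ρ_𝐢⁺` of `ℤ^m`. -/
noncomputable def rhoPMap (A : Fin n → Fin n → ℤ) (ii : ℕ → Fin n) (m : ℕ)
    (v : Fin m → ℤ) : Fin m → ℤ :=
  ∑ k : Fin m, v k • rhoPE A ii m ((k:ℕ)+1)

/-- The endomorphism `ρ_𝐢⁻` of `ℤ^m`. -/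
noncomputable def rhoMMap (A : Fin n → Fin n → ℤ) (ii : ℕ → Fin n) (m : ℕ)
    (v : Fin m → ℤ) : Fin m → ℤ :=
  ∑ k : Fin m, v k • rhoME A ii m ((k:ℕ)+1)

/-- `𝐚_λ = -∑_{k=1}^m (w_k^∨ α_{i_k}^∨, w_m λ) ε_k ∈ ℤ^m`. -/
def avec (A : Fin n → Fin n → ℤ) (ii : ℕ → Fin n) (m : ℕ) (lam : PLat n) :
    Fin m → ℤ :=
  fun k => -(pairQP A (wQ A ii ((k:ℕ)+1) (coroot (ii ((k:ℕ)+1)))) (wP A ii m lam))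

/-- `|𝐚| = ∑_{k=1}^m a_k α_{i_k} ∈ 𝒬 ⊆ 𝒫`. -/
def degP (ii : ℕ → Fin n) (m : ℕ) (a : Fin m → ℤ) : PLat n :=
  (fun j => ∑ k : Fin m, if ii ((k:ℕ)+1) = j then a k else 0, 0)

/-- The pairing `(μ, λ) = ∑ mᵢ dᵢ (αᵢ^∨, λ)` for `μ = ∑ mᵢ αᵢ ∈ 𝒬` and `λ ∈ 𝒫`
(induced by identifying `αᵢ` with `dᵢ αᵢ^∨`). -/
def pairAl (A : Fin n → Fin n → ℤ) (d : Fin n → ℤ) (mu lam : PLat n) : ℤ :=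
  ∑ j, mu.1 j * (d j * pairQP A (coroot j) lam)


namespace PhiInvAux

variable {n : ℕ}

lemma sQ_eq (A : Fin n → Fin n → ℤ) (a : Fin n) (x : QvLat n) :
    sQ A a x = x - (∑ k, A k a * x k) • coroot a := by
  funext j
  simp only [sQ, coroot, Pi.sub_apply, Pi.smul_apply, smul_eq_mul]
  split <;> simp_all

lemma sP_eq (A : Fin n → Fin n → ℤ) (a : Fin n) (lam : PLat n) :
    sP A a lam = lam - ((∑ k, A a k * lam.1 k) + lam.2 a) • alP a := by
  ext j
  · simp only [sP, alP, Prod.fst_sub, Prod.smul_fst, Pi.sub_apply, Pi.smul_apply, smul_eq_mul]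
    split <;> simp_all
  · simp [sP, alP]

lemma pairQP_sub_right (A : Fin n → Fin n → ℤ) (x : QvLat n) (lam mu : PLat n) :
    pairQP A x (lam - mu) = pairQP A x lam - pairQP A x mu := by
  simp only [pairQP, Prod.fst_sub, Prod.snd_sub, Pi.sub_apply, mul_sub, sub_mul,
    Finset.sum_sub_distrib]
  ring

lemma pairQP_smul_right (A : Fin n → Fin n → ℤ) (c : ℤ) (x : QvLat n) (lam : PLat n) :
    pairQP A x (c • lam) = c * pairQP A x lam := by
  simp only [pairQP, Prod.smul_fst, Prod.smul_snd, Pi.smul_apply, smul_eq_mul]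
  rw [mul_add, Finset.mul_sum, Finset.mul_sum]
  congr 1
  · exact Finset.sum_congr rfl fun a _ => by
      rw [Finset.mul_sum]; exact Finset.sum_congr rfl fun b _ => by ring
  · exact Finset.sum_congr rfl fun a _ => by ring

lemma pairQP_sub_left (A : Fin n → Fin n → ℤ) (x y : QvLat n) (lam : PLat n) :
    pairQP A (x - y) lam = pairQP A x lam - pairQP A y lam := by
  simp only [pairQP, Pi.sub_apply, sub_mul, Finset.sum_sub_distrib]
  ring

lemma pairQP_smul_left (A : Fin n → Fin n → ℤ) (c : ℤ) (x : QvLat n) (lam : PLat n) :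
    pairQP A (c • x) lam = c * pairQP A x lam := by
  simp only [pairQP, Pi.smul_apply, smul_eq_mul]
  rw [mul_add, Finset.mul_sum, Finset.mul_sum]
  congr 1
  · exact Finset.sum_congr rfl fun a _ => by
      rw [Finset.mul_sum]; exact Finset.sum_congr rfl fun b _ => by ring
  · exact Finset.sum_congr rfl fun a _ => by ring

lemma pairQP_coroot (A : Fin n → Fin n → ℤ) (a : Fin n) (lam : PLat n) :
    pairQP A (coroot a) lam = (∑ b, A a b * lam.1 b) + lam.2 a := by
  simp only [pairQP]
  have h2 : (∑ c, coroot a c * lam.2 c) = lam.2 a := by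
    rw [Finset.sum_eq_single (M := ℤ) a (fun c _ hc => by simp [coroot, hc])
      (fun h => absurd (Finset.mem_univ a) h)]
    simp [coroot]
  rw [h2, Finset.sum_eq_single (M := ℤ) a (fun b _ hb => by simp [coroot, hb])
      (fun h => absurd (Finset.mem_univ a) h)]
  simp [coroot]

lemma pairQP_alP (A : Fin n → Fin n → ℤ) (x : QvLat n) (b : Fin n) :
    pairQP A x (alP b) = ∑ a, x a * A a b := by
  simp only [pairQP, alP]
  have h : ∀ a : Fin n, (∑ c, x a * A a c * (if c = b then (1:ℤ) else 0)) = x a * A a b := by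
    intro a
    rw [Finset.sum_eq_single (M := ℤ) b (fun c _ hc => by simp [hc])
      (fun h => absurd (Finset.mem_univ b) h)]
    simp
  simp only [h]
  simp

lemma pairQP_omP (A : Fin n → Fin n → ℤ) (x : QvLat n) (b : Fin n) :
    pairQP A x (omP b) = x b := by
  simp only [pairQP, omP, Pi.zero_apply, mul_zero, Finset.sum_const_zero, zero_add]
  rw [Finset.sum_eq_single (M := ℤ) b (fun c _ hc => by simp [hc])
    (fun h => absurd (Finset.mem_univ b) h)]
  simp

lemma pair_adj (A : Fin n → Fin n → ℤ) (a : Fin n) (x : QvLat n) (lam : PLat n) :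
    pairQP A (sQ A a x) lam = pairQP A x (sP A a lam) := by
  rw [sQ_eq, sP_eq, pairQP_sub_left, pairQP_sub_right, pairQP_smul_left, pairQP_smul_right,
    pairQP_coroot, pairQP_alP]
  have h : (∑ k, A k a * x k) = ∑ k, x k * A k a :=
    Finset.sum_congr rfl fun k _ => mul_comm _ _
  rw [h]; ring

end PhiInvAux

namespace PhiInvAux

lemma sP_sub (A : Fin n → Fin n → ℤ) (a : Fin n) (lam mu : PLat n) :
    sP A a (lam - mu) = sP A a lam - sP A a mu := by
  ext j
  · simp only [sP, Prod.fst_sub, Prod.snd_sub, Pi.sub_apply, mul_sub,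
      Finset.sum_sub_distrib]
    split <;> ring
  · rfl

lemma sP_smul (A : Fin n → Fin n → ℤ) (a : Fin n) (c : ℤ) (lam : PLat n) :
    sP A a (c • lam) = c • sP A a lam := by
  ext j
  · simp only [sP, Prod.smul_fst, Prod.smul_snd, Pi.smul_apply, smul_eq_mul]
    have h : (∑ k, A a k * (c * lam.1 k)) = c * ∑ k, A a k * lam.1 k := by
      rw [Finset.mul_sum]; exact Finset.sum_congr rfl fun k _ => by ring
    split <;> [rw [h]; skip] <;> ring
  · rfl

lemma wP_sub (A : Fin n → Fin n → ℤ) (ii : ℕ → Fin n) (l : ℕ) (lam mu : PLat n) :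
    wP A ii l (lam - mu) = wP A ii l lam - wP A ii l mu := by
  induction l generalizing lam mu with
  | zero => rfl
  | succ l ih => simp only [wP, Function.comp_apply, sP_sub, ih]

lemma wP_smul (A : Fin n → Fin n → ℤ) (ii : ℕ → Fin n) (l : ℕ) (c : ℤ) (lam : PLat n) :
    wP A ii l (c • lam) = c • wP A ii l lam := by
  induction l generalizing lam with
  | zero => rfl
  | succ l ih => simp only [wP, Function.comp_apply, sP_smul, ih]

lemma sP_fst_self (A : Fin n → Fin n → ℤ) (a : Fin n) (lam : PLat n) :
    (sP A a lam).1 a = lam.1 a - ((∑ k, A a k * lam.1 k) + lam.2 a) := by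
  simp [sP]

lemma sP_snd (A : Fin n → Fin n → ℤ) (a : Fin n) (lam : PLat n) :
    (sP A a lam).2 = lam.2 := rfl

lemma sP_sP (A : Fin n → Fin n → ℤ) (hA : ∀ i, A i i = 2) (a : Fin n) (lam : PLat n) :
    sP A a (sP A a lam) = lam := by
  have key : (∑ k, A a k * (sP A a lam).1 k)
      = (∑ k, A a k * lam.1 k) - 2 * ((∑ k, A a k * lam.1 k) + lam.2 a) := by
    have expand : ∀ k : Fin n, A a k * (sP A a lam).1 k
        = A a k * lam.1 k - (if k = a then 2 * ((∑ k, A a k * lam.1 k) + lam.2 a) else 0) := by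
      intro k
      by_cases hk : k = a
      · subst hk
        rw [sP_fst_self, if_pos rfl, hA]
        ring
      · have : (sP A a lam).1 k = lam.1 k := by simp [sP, hk]
        rw [this, if_neg hk]
        ring
    rw [Finset.sum_congr rfl fun k _ => expand k, Finset.sum_sub_distrib,
      Finset.sum_ite_eq' Finset.univ a (fun _ => 2 * ((∑ k, A a k * lam.1 k) + lam.2 a))]
    simp
  ext j
  · by_cases hj : j = a
    · show (sP A a (sP A a lam)).1 j = lam.1 j
      rw [hj, sP_fst_self, sP_fst_self, key, sP_snd]
      ring
    · show (sP A a (sP A a lam)).1 j = lam.1 j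
      simp [sP, hj]
  · rfl

lemma sP_omP_ne (A : Fin n → Fin n → ℤ) {a j : Fin n} (h : a ≠ j) :
    sP A a (omP j) = omP j := by
  ext k
  · simp only [sP, omP, Pi.zero_apply]
    split <;> simp_all [Ne.symm h]
  · rfl

lemma sP_omP_eq (A : Fin n → Fin n → ℤ) (a : Fin n) :
    sP A a (omP a) = omP a - alP a := by
  ext k
  · simp only [sP, omP, alP, Prod.fst_sub, Pi.sub_apply, Pi.zero_apply]
    split <;> simp_all
  · simp [sP, omP, alP]

lemma sP_alP (A : Fin n → Fin n → ℤ) (a b : Fin n) :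
    sP A a (alP b) = alP b - A a b • alP a := by
  ext k
  · simp only [sP, alP, Prod.fst_sub, Prod.smul_fst, Pi.sub_apply, Pi.smul_apply, smul_eq_mul]
    have h : (∑ k, A a k * (if k = b then (1:ℤ) else 0)) = A a b := by
      rw [Finset.sum_eq_single (M := ℤ) b (fun c _ hc => by simp [hc])
        (fun h => absurd (Finset.mem_univ b) h)]
      simp
    by_cases hk : k = a
    · subst hk; rw [if_pos rfl, h]; simp
    · rw [if_neg hk]; simp [hk]
  · simp [sP, alP]

/-- `uP t = s_{i_t} ∘ ⋯ ∘ s_{i_1}` -/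
def uP (A : Fin n → Fin n → ℤ) (ii : ℕ → Fin n) : ℕ → PLat n → PLat n
  | 0 => id
  | (l+1) => fun lam => sP A (ii (l+1)) (uP A ii l lam)

lemma pair_wQ (A : Fin n → Fin n → ℤ) (ii : ℕ → Fin n) (t : ℕ) (x : QvLat n) (lam : PLat n) :
    pairQP A (wQ A ii t x) lam = pairQP A x (uP A ii t lam) := by
  induction t generalizing x lam with
  | zero => rfl
  | succ t ih =>
    show pairQP A (wQ A ii t (sQ A (ii (t+1)) x)) lam = _
    rw [ih, pair_adj]
    rfl

lemma uP_wP (A : Fin n → Fin n → ℤ) (hA : ∀ i, A i i = 2) (ii : ℕ → Fin n) (t : ℕ)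
    (lam : PLat n) : uP A ii t (wP A ii t lam) = lam := by
  induction t generalizing lam with
  | zero => rfl
  | succ t ih =>
    show sP A (ii (t+1)) (uP A ii t (wP A ii t (sP A (ii (t+1)) lam))) = lam
    rw [ih, sP_sP A hA]

lemma pair_wQ_wP (A : Fin n → Fin n → ℤ) (hA : ∀ i, A i i = 2) (ii : ℕ → Fin n) (t : ℕ)
    (x : QvLat n) (lam : PLat n) :
    pairQP A (wQ A ii t x) (wP A ii t lam) = pairQP A x lam := by
  rw [pair_wQ, uP_wP A hA]

lemma wP_omP_descent (A : Fin n → Fin n → ℤ) (ii : ℕ → Fin n) {j : Fin n} {s l : ℕ}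
    (hsl : s ≤ l) (h : ∀ r, s < r → r ≤ l → ii r ≠ j) :
    wP A ii l (omP j) = wP A ii s (omP j) := by
  induction l with
  | zero =>
    have hs0 : s = 0 := Nat.le_zero.mp hsl
    rw [hs0]
  | succ l ih =>
    rcases Nat.eq_or_lt_of_le hsl with heq | hlt
    · rw [heq]
    · have hs : s ≤ l := by omega
      show wP A ii l (sP A (ii (l+1)) (omP j)) = _
      rw [sP_omP_ne A (h (l+1) (by omega) (by omega)),
        ih hs (fun r hr hrl => h r hr (by omega))]

end PhiInvAux

namespace PhiInvAux

open scoped Classical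

/-- last occurrence of value `j` in positions `[1, l]`, or `0` -/
noncomputable def m0 (ii : ℕ → Fin n) (l : ℕ) (j : Fin n) : ℕ :=
  sSup ({s | 1 ≤ s ∧ s ≤ l ∧ ii s = j} ∪ {0})

lemma m0_bdd (ii : ℕ → Fin n) (l : ℕ) (j : Fin n) :
    BddAbove ({s | 1 ≤ s ∧ s ≤ l ∧ ii s = j} ∪ {0}) := by
  refine ⟨l, fun x hx => ?_⟩
  rcases hx with hx | hx
  · exact hx.2.1
  · simp only [Set.mem_singleton_iff] at hx; omega

lemma m0_le (ii : ℕ → Fin n) (l : ℕ) (j : Fin n) : m0 ii l j ≤ l := by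
  rw [m0]
  refine csSup_le ⟨0, Set.mem_union_right _ rfl⟩ ?_
  intro b hb
  rcases hb with hb | hb
  · exact hb.2.1
  · simp only [Set.mem_singleton_iff] at hb; omega

lemma m0_spec (ii : ℕ → Fin n) (l : ℕ) (j : Fin n) (h1 : 1 ≤ m0 ii l j) :
    m0 ii l j ≤ l ∧ ii (m0 ii l j) = j := by
  have hmem := Nat.sSup_mem (s := {s | 1 ≤ s ∧ s ≤ l ∧ ii s = j} ∪ {0})
    ⟨0, Set.mem_union_right _ rfl⟩ (m0_bdd ii l j)
  rcases hmem with hm | hm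
  · exact ⟨hm.2.1, hm.2.2⟩
  · simp only [Set.mem_singleton_iff] at hm
    rw [m0] at h1
    omega

lemma le_m0 (ii : ℕ → Fin n) {l s : ℕ} {j : Fin n} (hs : 1 ≤ s) (hsl : s ≤ l)
    (hij : ii s = j) : s ≤ m0 ii l j :=
  le_csSup (m0_bdd ii l j) (Set.mem_union_left _ ⟨hs, hsl, hij⟩)

/-- `p_{t,l} = (w_t^∨ α_{i_t}^∨, w_l ω_{i_l})` -/
noncomputable def pfun (A : Fin n → Fin n → ℤ) (ii : ℕ → Fin n) (t l : ℕ) : ℤ :=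
  pairQP A (wQ A ii t (coroot (ii t))) (wP A ii l (omP (ii l)))

noncomputable def gfun (A : Fin n → Fin n → ℤ) (ii : ℕ → Fin n) (t l : ℕ) (j : Fin n) : ℤ :=
  pairQP A (wQ A ii t (coroot (ii t))) (wP A ii l (omP j))

noncomputable def qfun (A : Fin n → Fin n → ℤ) (ii : ℕ → Fin n) (t l : ℕ) (j : Fin n) : ℤ :=
  pairQP A (wQ A ii t (coroot (ii t))) (wP A ii l (alP j))

lemma p_diag (A : Fin n → Fin n → ℤ) (hA : ∀ i, A i i = 2) (ii : ℕ → Fin n) (t : ℕ) :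
    pfun A ii t t = 1 := by
  rw [pfun, pair_wQ_wP A hA, pairQP_omP]
  simp [coroot]

lemma g_case_B (A : Fin n → Fin n → ℤ) (hA : ∀ i, A i i = 2) (ii : ℕ → Fin n)
    {t l : ℕ} {j : Fin n} (ht : 1 ≤ t) (htl : t ≤ l)
    (h : ∀ r, t ≤ r → r ≤ l → ii r ≠ j) : gfun A ii t l j = 0 := by
  obtain ⟨t', rfl⟩ : ∃ t', t = t' + 1 := ⟨t - 1, by omega⟩
  rw [gfun, wP_omP_descent A ii (s := t') (by omega) (fun r hr hrl => h r (by omega) hrl),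
    pair_wQ]
  have h1 : uP A ii (t' + 1) (wP A ii t' (omP j))
      = sP A (ii (t' + 1)) (uP A ii t' (wP A ii t' (omP j))) := rfl
  rw [h1, uP_wP A hA, sP_omP_ne A (h (t' + 1) le_rfl htl), pairQP_omP]
  have hne : j ≠ ii (t' + 1) := fun h' => (h (t' + 1) le_rfl htl) h'.symm
  simp [coroot, hne]

lemma g_eval (A : Fin n → Fin n → ℤ) (hA : ∀ i, A i i = 2) (ii : ℕ → Fin n)
    {t l : ℕ} (j : Fin n) (ht : 1 ≤ t) (htl : t ≤ l) :
    gfun A ii t l j = if t ≤ m0 ii l j then pfun A ii t (m0 ii l j) else 0 := by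
  by_cases hc : t ≤ m0 ii l j
  · rw [if_pos hc]
    have h1 : 1 ≤ m0 ii l j := le_trans ht hc
    obtain ⟨hml, hmj⟩ := m0_spec ii l j h1
    have hdesc : wP A ii l (omP j) = wP A ii (m0 ii l j) (omP j) := by
      apply wP_omP_descent A ii hml
      intro r hr hrl hrj
      have := le_m0 ii (by omega) hrl hrj
      omega
    rw [gfun, hdesc, pfun, hmj]
  · rw [if_neg hc]
    apply g_case_B A hA ii ht htl
    intro r hr hrl hrj
    have := le_m0 ii (by omega) hrl hrj
    omega

lemma sum_eq_g (A : Fin n → Fin n → ℤ) (hA : ∀ i, A i i = 2) (ii : ℕ → Fin n)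
    {t l : ℕ} (j : Fin n) (ht : 1 ≤ t) (htl : t ≤ l) :
    ∑ s ∈ Finset.Icc t l,
      (if (∀ r, s < r → r ≤ l → ii r ≠ ii s) ∧ ii s = j then pfun A ii t s else 0)
    = gfun A ii t l j := by
  classical
  rw [g_eval A hA ii j ht htl]
  by_cases hc : t ≤ m0 ii l j
  · rw [if_pos hc]
    have h1 : 1 ≤ m0 ii l j := le_trans ht hc
    obtain ⟨hml, hmj⟩ := m0_spec ii l j h1
    have hnocc : ∀ r, m0 ii l j < r → r ≤ l → ii r ≠ ii (m0 ii l j) := by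
      intro r hr hrl hrj
      have := le_m0 (j := j) ii (show 1 ≤ r by omega) hrl (hrj.trans hmj)
      omega
    have h0 : ∀ s ∈ Finset.Icc t l, s ≠ m0 ii l j →
        (if (∀ r, s < r → r ≤ l → ii r ≠ ii s) ∧ ii s = j then pfun A ii t s else 0) = 0 := by
      intro s hs hne
      rw [Finset.mem_Icc] at hs
      rw [if_neg]
      rintro ⟨hno, hsj⟩
      have hsm : s ≤ m0 ii l j := le_m0 ii (by omega) hs.2 hsj
      exact hno (m0 ii l j) (by omega) hml (by rw [hmj, hsj])
    rw [Finset.sum_eq_single_of_mem (m0 ii l j) (Finset.mem_Icc.mpr ⟨hc, hml⟩) h0,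
      if_pos ⟨hnocc, hmj⟩]

  · rw [if_neg hc]
    apply Finset.sum_eq_zero
    intro s hs
    rw [Finset.mem_Icc] at hs
    rw [if_neg]
    rintro ⟨hnocc, hsj⟩
    have := le_m0 ii (by omega) hs.2 hsj
    omega

end PhiInvAux

namespace PhiInvAux

open scoped Classical

lemma wP_alP_split (A : Fin n → Fin n → ℤ) (ii : ℕ → Fin n) (l : ℕ) :
    wP A ii l (alP (ii (l+1)))
      = wP A ii l (omP (ii (l+1))) - wP A ii (l+1) (omP (ii (l+1))) := by
  have h : wP A ii (l+1) (omP (ii (l+1)))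
      = wP A ii l (omP (ii (l+1))) - wP A ii l (alP (ii (l+1))) := by
    show wP A ii l (sP A (ii (l+1)) (omP (ii (l+1)))) = _
    rw [sP_omP_eq, wP_sub]
  rw [h]
  abel

lemma q_step (A : Fin n → Fin n → ℤ) (ii : ℕ → Fin n) (t l : ℕ) (j : Fin n) :
    qfun A ii t (l+1) j
      = qfun A ii t l j - A (ii (l+1)) j * qfun A ii t l (ii (l+1)) := by
  rw [qfun, qfun, qfun]
  have h : wP A ii (l+1) (alP j)
      = wP A ii l (alP j) - A (ii (l+1)) j • wP A ii l (alP (ii (l+1))) := by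
    show wP A ii l (sP A (ii (l+1)) (alP j)) = _
    rw [sP_alP, wP_sub, wP_smul]
  rw [h, pairQP_sub_right, pairQP_smul_right]

lemma q_alP_split (A : Fin n → Fin n → ℤ) (ii : ℕ → Fin n) (t l : ℕ) :
    qfun A ii t l (ii (l+1)) = gfun A ii t l (ii (l+1)) - pfun A ii t (l+1) := by
  rw [qfun, gfun, pfun, wP_alP_split, pairQP_sub_right]

lemma nocc_succ_iff (ii : ℕ → Fin n) {s l : ℕ} (hsl : s ≤ l) :
    (∀ r, s < r → r ≤ l+1 → ii r ≠ ii s)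
      ↔ (∀ r, s < r → r ≤ l → ii r ≠ ii s) ∧ ii (l+1) ≠ ii s := by
  constructor
  · intro h
    exact ⟨fun r hr hrl => h r hr (by omega), h (l+1) (by omega) le_rfl⟩
  · rintro ⟨h1, h2⟩ r hr hrl
    rcases Nat.eq_or_lt_of_le hrl with heq | hlt
    · rw [heq]; exact h2
    · exact h1 r hr (by omega)

lemma q_formula (A : Fin n → Fin n → ℤ) (hA : ∀ i, A i i = 2) (ii : ℕ → Fin n)
    {t : ℕ} (ht : 1 ≤ t) :
    ∀ l, t ≤ l → ∀ j, qfun A ii t l j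
      = ∑ s ∈ Finset.Icc t l,
          (if ∀ r, s < r → r ≤ l → ii r ≠ ii s then A (ii s) j * pfun A ii t s else 0) := by
  refine Nat.le_induction ?_ ?_
  · intro j
    rw [Finset.Icc_self, Finset.sum_singleton,
      if_pos (fun r hr hrt => absurd (lt_of_lt_of_le hr hrt) (lt_irrefl t)),
      p_diag A hA, qfun, pair_wQ_wP A hA, pairQP_alP]
    rw [Finset.sum_eq_single (M := ℤ) (ii t) (fun c _ hc => by simp [coroot, hc])
      (fun h => absurd (Finset.mem_univ _) h)]
    simp [coroot]
  · intro l htl ih j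
    rw [q_step, ih j, q_alP_split,
      Finset.sum_Icc_succ_top (by omega : t ≤ l + 1),
      if_pos (fun r hr hrl => absurd (lt_of_lt_of_le hr hrl) (lt_irrefl (l+1)))]
    have hterm : ∀ s ∈ Finset.Icc t l,
        (if ∀ r, s < r → r ≤ l+1 → ii r ≠ ii s then A (ii s) j * pfun A ii t s else 0)
        = (if ∀ r, s < r → r ≤ l → ii r ≠ ii s then A (ii s) j * pfun A ii t s else 0)
          - A (ii (l+1)) j *
            (if (∀ r, s < r → r ≤ l → ii r ≠ ii s) ∧ ii s = ii (l+1) then pfun A ii t s else 0) := by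
      intro s hs
      rw [Finset.mem_Icc] at hs
      by_cases h1 : ∀ r, s < r → r ≤ l → ii r ≠ ii s
      · by_cases h2 : ii s = ii (l+1)
        · rw [if_neg, if_pos h1, if_pos ⟨h1, h2⟩, h2]
          · ring
          · rw [nocc_succ_iff ii hs.2]
            rintro ⟨-, hne⟩
            exact hne h2.symm
        · rw [if_pos, if_pos h1, if_neg (fun hc => h2 hc.2)]
          · ring
          · rw [nocc_succ_iff ii hs.2]
            exact ⟨h1, fun hc => h2 hc.symm⟩
      · rw [if_neg, if_neg h1, if_neg (fun hc => h1 hc.1)]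
        · ring
        · rw [nocc_succ_iff ii hs.2]
          exact fun hc => h1 hc.1
    rw [Finset.sum_congr rfl hterm, Finset.sum_sub_distrib, ← Finset.mul_sum,
      sum_eq_g A hA ii (ii (l+1)) ht htl]
    ring

lemma kminus_eq_m0 (ii : ℕ → Fin n) (k : ℕ) : kminus ii k = m0 ii (k-1) (ii k) := by
  rw [kminus, m0]
  congr 1
  ext s
  constructor
  · rintro (⟨h1, h2, h3⟩ | h)
    · exact Or.inl ⟨h1, by omega, h3⟩
    · exact Or.inr h
  · rintro (⟨h1, h2, h3⟩ | h)
    · exact Or.inl ⟨h1, by omega, h3⟩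
    · exact Or.inr h

lemma kplus_gt_iff (ii : ℕ → Fin n) {m s k : ℕ} (hk : k ≤ m) :
    k < kplus ii m s ↔ ∀ r, s < r → r ≤ k → ii r ≠ ii s := by
  constructor
  · intro h r hr hrk hrs
    have : kplus ii m s ≤ r :=
      Nat.sInf_le (Set.mem_union_left _ ⟨hr, le_trans hrk hk, hrs⟩)
    omega
  · intro h
    have hmem : kplus ii m s ∈ ({l | s < l ∧ l ≤ m ∧ ii l = ii s} ∪ {m+1} : Set ℕ) :=
      Nat.sInf_mem ⟨m+1, Set.mem_union_right _ rfl⟩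
    rcases hmem with ⟨h1, h2, h3⟩ | hm
    · by_contra hc
      push_neg at hc
      exact h _ h1 hc h3
    · simp only [Set.mem_singleton_iff] at hm
      omega

lemma key_identity (A : Fin n → Fin n → ℤ) (hA : ∀ i, A i i = 2) (ii : ℕ → Fin n)
    {m t k : ℕ} (ht : 1 ≤ t) (htk : t ≤ k) (hkm : k ≤ m) :
    pfun A ii t k + (if t ≤ kminus ii k then pfun A ii t (kminus ii k) else 0)
      + ∑ s ∈ Finset.Icc t (k-1),
          (if k < kplus ii m s then A (ii s) (ii k) else 0) * pfun A ii t s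
    = if t = k then 1 else 0 := by
  rcases Nat.eq_or_lt_of_le htk with heq | hlt
  · subst heq
    have hk1 : kminus ii t < t := by
      have := m0_le ii (t-1) (ii t)
      rw [kminus_eq_m0]
      omega
    rw [p_diag A hA, if_neg (by omega), if_pos rfl,
      Finset.Icc_eq_empty (by omega : ¬ t ≤ t - 1), Finset.sum_empty]
    ring
  · obtain ⟨l, rfl⟩ : ∃ l, k = l + 1 := ⟨k - 1, by omega⟩
    have htl : t ≤ l := by omega
    have hstep : pfun A ii t (l+1)
        = gfun A ii t l (ii (l+1)) - qfun A ii t l (ii (l+1)) := by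
      have := q_alP_split A ii t l
      linarith [this]
    have hsnd : (if t ≤ kminus ii (l+1) then pfun A ii t (kminus ii (l+1)) else 0)
        = gfun A ii t l (ii (l+1)) := by
      rw [kminus_eq_m0, g_eval A hA ii (ii (l+1)) ht htl]
      norm_num
    have hterm : ∀ s ∈ Finset.Icc t l,
        (if l+1 < kplus ii m s then A (ii s) (ii (l+1)) else 0) * pfun A ii t s
        = (if ∀ r, s < r → r ≤ l → ii r ≠ ii s then A (ii s) (ii (l+1)) * pfun A ii t s else 0)
          - 2 * (if (∀ r, s < r → r ≤ l → ii r ≠ ii s) ∧ ii s = ii (l+1)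
              then pfun A ii t s else 0) := by
      intro s hs
      rw [Finset.mem_Icc] at hs
      have hiff : (l+1 < kplus ii m s) ↔
          ((∀ r, s < r → r ≤ l → ii r ≠ ii s) ∧ ii (l+1) ≠ ii s) := by
        rw [kplus_gt_iff ii hkm]
        exact nocc_succ_iff ii hs.2
      by_cases h1 : ∀ r, s < r → r ≤ l → ii r ≠ ii s
      · by_cases h2 : ii s = ii (l + 1)
        · rw [if_neg (fun hc => ((hiff.mp hc).2) h2.symm), if_pos h1, if_pos ⟨h1, h2⟩, h2, hA]
          ring
        · rw [if_pos (hiff.mpr ⟨h1, fun hc => h2 hc.symm⟩), if_pos h1,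
            if_neg (fun hc => h2 hc.2)]
          ring
      · rw [if_neg (fun hc => h1 (hiff.mp hc).1), if_neg h1, if_neg (fun hc => h1 hc.1)]
        ring
    have hsum : (∑ s ∈ Finset.Icc t (l+1-1),
          (if l+1 < kplus ii m s then A (ii s) (ii (l+1)) else 0) * pfun A ii t s)
        = qfun A ii t l (ii (l+1)) - 2 * gfun A ii t l (ii (l+1)) := by
      have hl1 : l + 1 - 1 = l := by omega
      rw [hl1, Finset.sum_congr rfl hterm, Finset.sum_sub_distrib, ← Finset.mul_sum,
        sum_eq_g A hA ii (ii (l+1)) ht htl, q_formula A hA ii ht l htl]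
    rw [hstep, hsnd, hsum, if_neg (by omega)]
    ring

end PhiInvAux

namespace PhiInvAux

lemma kminus_le (ii : ℕ → Fin n) (k : ℕ) : kminus ii k ≤ k - 1 := by
  rw [kminus_eq_m0]
  exact m0_le ii (k-1) (ii k)

lemma sum_smul_eps_apply {m : ℕ} (c : Fin m → ℤ) (t : Fin m) :
    (∑ k : Fin m, c k • eps m ((k:ℕ)+1)) t = c t := by
  rw [Finset.sum_apply]
  simp only [Pi.smul_apply, smul_eq_mul, eps]
  rw [Finset.sum_eq_single (M := ℤ) t
    (fun k _ hk => by
      have : ¬((t:ℕ)+1 = (k:ℕ)+1) := fun h => hk (Fin.ext (by omega))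
      rw [if_neg this, mul_zero])
    (fun h => absurd (Finset.mem_univ _) h)]
  simp

lemma phiE'_apply (A : Fin n → Fin n → ℤ) (ii : ℕ → Fin n) (m l : ℕ) (t : Fin m) :
    phiE' A ii m l t = -(if (t:ℕ)+1 ≤ l then pfun A ii ((t:ℕ)+1) l else 0) := by
  rw [phiE', Pi.neg_apply, sum_smul_eps_apply]
  rfl

lemma phiE_apply (A : Fin n → Fin n → ℤ) (ii : ℕ → Fin n) (m k : ℕ) (j : Fin m) :
    phiE A ii m k j = -((if (j:ℕ)+1 = k then 1 else 0)
      + (if (j:ℕ)+1 = kminus ii k then 1 else 0)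
      + (if (j:ℕ)+1 < k ∧ k < kplus ii m ((j:ℕ)+1)
          then A (ii ((j:ℕ)+1)) (ii k) else 0)) := by
  rw [phiE]
  simp only [Pi.sub_apply, Pi.neg_apply]
  rw [show (∑ l : Fin m, (if (l:ℕ)+1 < k ∧ k < kplus ii m ((l:ℕ)+1)
      then A (ii ((l:ℕ)+1)) (ii k) else 0) • eps m ((l:ℕ)+1)) j
    = (if (j:ℕ)+1 < k ∧ k < kplus ii m ((j:ℕ)+1) then A (ii ((j:ℕ)+1)) (ii k) else 0)
    from sum_smul_eps_apply _ j]
  rw [eps, eps]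
  ring

/-- matrix of `φ` -/
noncomputable def Mphi (A : Fin n → Fin n → ℤ) (ii : ℕ → Fin n) (m : ℕ) :
    Matrix (Fin m) (Fin m) ℤ :=
  Matrix.of fun j k => phiE A ii m ((k:ℕ)+1) j

/-- matrix of `φ'` -/
noncomputable def Mphi' (A : Fin n → Fin n → ℤ) (ii : ℕ → Fin n) (m : ℕ) :
    Matrix (Fin m) (Fin m) ℤ :=
  Matrix.of fun t j => phiE' A ii m ((j:ℕ)+1) t

lemma phiMap_eq (A : Fin n → Fin n → ℤ) (ii : ℕ → Fin n) (m : ℕ) (v : Fin m → ℤ) :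
    phiMap A ii m v = (Mphi A ii m).mulVec v := by
  funext j
  rw [phiMap, Finset.sum_apply]
  show _ = ∑ k, Mphi A ii m j k * v k
  simp only [Pi.smul_apply, smul_eq_mul, Mphi, Matrix.of_apply]
  exact Finset.sum_congr rfl fun k _ => mul_comm _ _

lemma phiMap'_eq (A : Fin n → Fin n → ℤ) (ii : ℕ → Fin n) (m : ℕ) (v : Fin m → ℤ) :
    phiMap' A ii m v = (Mphi' A ii m).mulVec v := by
  funext t
  rw [phiMap', Finset.sum_apply]
  show _ = ∑ l, Mphi' A ii m t l * v l
  simp only [Pi.smul_apply, smul_eq_mul, Mphi', Matrix.of_apply]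
  exact Finset.sum_congr rfl fun l _ => mul_comm _ _

lemma fin_sum_shift (m : ℕ) (g : ℕ → ℤ) :
    ∑ j : Fin m, g ((j:ℕ)+1) = ∑ s ∈ Finset.Icc 1 m, g s := by
  rw [← Finset.Ico_add_one_right_eq_Icc, Finset.sum_Ico_eq_sum_range,
    Fin.sum_univ_eq_sum_range (fun j => g (j+1)) m]
  have h1 : m + 1 - 1 = m := by omega
  rw [h1]
  exact Finset.sum_congr rfl fun i _ => by rw [Nat.add_comm]

end PhiInvAux

namespace PhiInvAux

/-- column entries of `φ'` as a function of the row position `s = t+1` -/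
noncomputable def Pv (A : Fin n → Fin n → ℤ) (ii : ℕ → Fin n) (t : ℕ) : ℕ → ℤ :=
  fun s => if t + 1 ≤ s then pfun A ii (t + 1) s else 0

lemma Mphi'_mul_Mphi (A : Fin n → Fin n → ℤ) (hA : ∀ i, A i i = 2) (ii : ℕ → Fin n)
    (m : ℕ) : Mphi' A ii m * Mphi A ii m = 1 := by
  ext t k
  have hkm' : (k:ℕ) < m := k.isLt
  rw [Matrix.mul_apply, Matrix.one_apply]
  have hterm : ∀ j : Fin m, Mphi' A ii m t j * Mphi A ii m j k
      = Pv A ii (t:ℕ) ((j:ℕ)+1) * (if (j:ℕ)+1 = (k:ℕ)+1 then 1 else 0)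
        + Pv A ii (t:ℕ) ((j:ℕ)+1) * (if (j:ℕ)+1 = kminus ii ((k:ℕ)+1) then 1 else 0)
        + Pv A ii (t:ℕ) ((j:ℕ)+1) * (if (j:ℕ)+1 ≤ (k:ℕ) ∧ (k:ℕ)+1 < kplus ii m ((j:ℕ)+1)
            then A (ii ((j:ℕ)+1)) (ii ((k:ℕ)+1)) else 0) := by
    intro j
    show phiE' A ii m ((j:ℕ)+1) t * phiE A ii m ((k:ℕ)+1) j = _
    rw [phiE'_apply, phiE_apply, neg_mul_neg]
    have e3 : (if (j:ℕ)+1 < (k:ℕ)+1 ∧ (k:ℕ)+1 < kplus ii m ((j:ℕ)+1)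
          then A (ii ((j:ℕ)+1)) (ii ((k:ℕ)+1)) else 0)
        = (if (j:ℕ)+1 ≤ (k:ℕ) ∧ (k:ℕ)+1 < kplus ii m ((j:ℕ)+1)
          then A (ii ((j:ℕ)+1)) (ii ((k:ℕ)+1)) else 0) :=
      if_congr (and_congr_left' (by omega)) rfl rfl
    rw [e3, Pv]
    ring
  rw [Finset.sum_congr rfl (fun j _ => hterm j), Finset.sum_add_distrib,
    Finset.sum_add_distrib,
    fin_sum_shift m (fun s => Pv A ii (t:ℕ) s * (if s = (k:ℕ)+1 then 1 else 0)),
    fin_sum_shift m (fun s => Pv A ii (t:ℕ) s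
      * (if s = kminus ii ((k:ℕ)+1) then 1 else 0)),
    fin_sum_shift m (fun s => Pv A ii (t:ℕ) s
      * (if s ≤ (k:ℕ) ∧ (k:ℕ)+1 < kplus ii m s then A (ii s) (ii ((k:ℕ)+1)) else 0))]
  have hS1 : (∑ s ∈ Finset.Icc 1 m, Pv A ii (t:ℕ) s * (if s = (k:ℕ)+1 then 1 else 0))
      = if (t:ℕ) ≤ (k:ℕ) then pfun A ii ((t:ℕ)+1) ((k:ℕ)+1) else 0 := by
    have h1 : ∀ s, Pv A ii (t:ℕ) s * (if s = (k:ℕ)+1 then 1 else 0)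
        = if s = (k:ℕ)+1 then Pv A ii (t:ℕ) s else 0 := by
      intro s
      by_cases hs : s = (k:ℕ)+1 <;> simp [hs]
    rw [Finset.sum_congr rfl (fun s _ => h1 s), Finset.sum_ite_eq' (Finset.Icc 1 m),
      if_pos (Finset.mem_Icc.mpr ⟨by omega, by omega⟩), Pv]
    exact if_congr (by omega) rfl rfl
  have hS2 : (∑ s ∈ Finset.Icc 1 m, Pv A ii (t:ℕ) s
        * (if s = kminus ii ((k:ℕ)+1) then 1 else 0))
      = if (t:ℕ)+1 ≤ kminus ii ((k:ℕ)+1)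
          then pfun A ii ((t:ℕ)+1) (kminus ii ((k:ℕ)+1)) else 0 := by
    have h1 : ∀ s, Pv A ii (t:ℕ) s * (if s = kminus ii ((k:ℕ)+1) then 1 else 0)
        = if s = kminus ii ((k:ℕ)+1) then Pv A ii (t:ℕ) s else 0 := by
      intro s
      by_cases hs : s = kminus ii ((k:ℕ)+1) <;> simp [hs]
    rw [Finset.sum_congr rfl (fun s _ => h1 s), Finset.sum_ite_eq' (Finset.Icc 1 m)]
    have hkm : kminus ii ((k:ℕ)+1) ≤ (k:ℕ) := by
      have := kminus_le ii ((k:ℕ)+1)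
      omega
    by_cases h0 : 1 ≤ kminus ii ((k:ℕ)+1)
    · rw [if_pos (Finset.mem_Icc.mpr ⟨h0, by omega⟩), Pv]
    · rw [if_neg (fun hc => h0 (Finset.mem_Icc.mp hc).1), if_neg (by omega)]
  have hS3 : (∑ s ∈ Finset.Icc 1 m, Pv A ii (t:ℕ) s
        * (if s ≤ (k:ℕ) ∧ (k:ℕ)+1 < kplus ii m s
            then A (ii s) (ii ((k:ℕ)+1)) else 0))
      = ∑ s ∈ Finset.Icc ((t:ℕ)+1) (k:ℕ),
          (if (k:ℕ)+1 < kplus ii m s then A (ii s) (ii ((k:ℕ)+1)) else 0)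
            * pfun A ii ((t:ℕ)+1) s := by
    have hsub : Finset.Icc ((t:ℕ)+1) (k:ℕ) ⊆ Finset.Icc 1 m :=
      Finset.Icc_subset_Icc (by omega) (by omega)
    have hzero : ∀ s ∈ Finset.Icc 1 m, s ∉ Finset.Icc ((t:ℕ)+1) (k:ℕ) →
        Pv A ii (t:ℕ) s * (if s ≤ (k:ℕ) ∧ (k:ℕ)+1 < kplus ii m s
            then A (ii s) (ii ((k:ℕ)+1)) else 0) = 0 := by
      intro s hs hns
      rw [Finset.mem_Icc] at hs
      rw [Finset.mem_Icc] at hns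
      push_neg at hns
      by_cases h1 : (t:ℕ)+1 ≤ s
      · have h2 : ¬ s ≤ (k:ℕ) := by
          intro h
          have := hns h1
          omega
        rw [if_neg (fun hc => h2 hc.1), mul_zero]
      · rw [Pv, if_neg h1, zero_mul]
    rw [← Finset.sum_subset hsub hzero]
    apply Finset.sum_congr rfl
    intro s hs
    rw [Finset.mem_Icc] at hs
    rw [Pv, if_pos hs.1,
      if_congr (and_iff_right hs.2) rfl rfl, mul_comm]
  rw [hS1, hS2, hS3]
  by_cases htk : (t:ℕ) ≤ (k:ℕ)
  · have hkey := key_identity A hA ii (m := m) (t := (t:ℕ)+1) (k := (k:ℕ)+1)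
      (by omega) (by omega) (by omega)
    rw [show (k:ℕ)+1-1 = (k:ℕ) from by omega] at hkey
    rw [if_pos htk, hkey]
    rcases eq_or_ne t k with h | h
    · rw [if_pos (by rw [h]), if_pos h]
    · rw [if_neg (fun hc : (t:ℕ)+1 = (k:ℕ)+1 => h (Fin.ext (by omega))), if_neg h]
  · rw [if_neg htk,
      if_neg (show ¬((t:ℕ)+1 ≤ kminus ii ((k:ℕ)+1)) from by
        have := kminus_le ii ((k:ℕ)+1); omega),
      Finset.Icc_eq_empty (by omega), Finset.sum_empty,
      if_neg (fun hc => htk (by rw [hc]))]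
    norm_num

end PhiInvAux

/-- `φ'_𝐢` is a two-sided inverse of `φ_𝐢` on `ℤ^m`. -/

theorem phi'_inverse_of_phi {n m : ℕ} (hm : 1 ≤ m)
    (A : Fin n → Fin n → ℤ) (d : Fin n → ℤ)
    (hA : ∀ i, A i i = 2) (hd : ∀ i, 0 < d i)
    (hsym : ∀ i j, d i * A i j = d j * A j i)
    (ii : ℕ → Fin n) :
    (∀ v : Fin m → ℤ, phiMap' A ii m (phiMap A ii m v) = v) ∧
    (∀ v : Fin m → ℤ, phiMap A ii m (phiMap' A ii m v) = v) := by
  have h1 : PhiInvAux.Mphi' A ii m * PhiInvAux.Mphi A ii m = 1 :=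
    PhiInvAux.Mphi'_mul_Mphi A hA ii m
  have h2 : PhiInvAux.Mphi A ii m * PhiInvAux.Mphi' A ii m = 1 :=
    mul_eq_one_comm.mp h1
  constructor
  · intro v
    rw [PhiInvAux.phiMap_eq, PhiInvAux.phiMap'_eq, Matrix.mulVec_mulVec, h1,
      Matrix.one_mulVec]
  · intro v
    rw [PhiInvAux.phiMap'_eq, PhiInvAux.phiMap_eq, Matrix.mulVec_mulVec, h2,
      Matrix.one_mulVec]
end

section
/- For every $k\in\{1,\dots,m\}$ one has $\textstyle\int_\mathbf{i}\big(\varphi_\mathbf{i}(\varepsilon_k)\big)=-\varepsilon_k-\sum_{\ell=1}^{k-1} a_{i_\ell i_k}\varepsilon_\ell$. -/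
open Finset

variable {n : ℕ}

section Aux3

variable {m : ℕ} (ii : ℕ → Fin n)

lemma kminus_mem (k : ℕ) :
    kminus ii k = 0 ∨
      (1 ≤ kminus ii k ∧ kminus ii k < k ∧ ii (kminus ii k) = ii k) := by
  have hne : ({l | 1 ≤ l ∧ l < k ∧ ii l = ii k} ∪ {0} : Set ℕ).Nonempty :=
    ⟨0, Or.inr rfl⟩
  have hbdd : BddAbove ({l | 1 ≤ l ∧ l < k ∧ ii l = ii k} ∪ {0} : Set ℕ) := by
    refine ⟨k, ?_⟩
    rintro x (⟨h1, h2, h3⟩ | h)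
    · exact le_of_lt h2
    · simp only [Set.mem_singleton_iff] at h; omega
  have hmem := Nat.sSup_mem hne hbdd
  rcases hmem with h | h
  · exact Or.inr ⟨h.1, h.2.1, h.2.2⟩
  · simp only [Set.mem_singleton_iff] at h
    exact Or.inl h

lemma le_kminus {k l : ℕ} (h1 : 1 ≤ l) (h2 : l < k) (h3 : ii l = ii k) :
    l ≤ kminus ii k := by
  have hbdd : BddAbove ({l | 1 ≤ l ∧ l < k ∧ ii l = ii k} ∪ {0} : Set ℕ) := by
    refine ⟨k, ?_⟩
    rintro x (⟨h1, h2, h3⟩ | h)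
    · exact le_of_lt h2
    · simp only [Set.mem_singleton_iff] at h; omega
  exact le_csSup hbdd (Or.inl ⟨h1, h2, h3⟩)

lemma kminus_lt {k : ℕ} (hk : 1 ≤ k) : kminus ii k < k := by
  rcases kminus_mem ii k with h | h
  · omega
  · exact h.2.1

lemma lt_kplus {k t : ℕ} (hk : k ≤ m)
    (H : ∀ p, t < p → p ≤ m → ii p = ii t → k < p) : k < kplus ii m t := by
  have hne : ({l | t < l ∧ l ≤ m ∧ ii l = ii t} ∪ {m+1} : Set ℕ).Nonempty :=
    ⟨m+1, Or.inr rfl⟩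
  have hmem := Nat.sInf_mem hne
  rcases hmem with h | h
  · exact H _ h.1 h.2.1 h.2.2
  · simp only [Set.mem_singleton_iff] at h
    rw [kplus, h]; omega

lemma kplus_le {t p : ℕ} (h1 : t < p) (h2 : p ≤ m) (h3 : ii p = ii t) :
    kplus ii m t ≤ p :=
  Nat.sInf_le (Or.inl ⟨h1, h2, h3⟩)

lemma intE_apply (t : ℕ) (p : Fin m) :
    intE ii m t p =
      if ((p:ℕ)+1 ≤ t ∧ ii ((p:ℕ)+1) = ii t) then 1 else 0 := by
  induction t using Nat.strong_induction_on with
  | _ t IH =>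
    rw [intE]
    by_cases h : kminus ii t < t
    · rw [dif_pos h]
      have hI := IH (kminus ii t) h
      simp only [Pi.add_apply, hI, eps]
      rcases kminus_mem ii t with h0 | ⟨h1, h2, h3⟩
      · by_cases hq : (p:ℕ)+1 = t
        · have : (p:ℕ)+1 ≤ t ∧ ii ((p:ℕ)+1) = ii t := ⟨le_of_eq hq, by rw [hq]⟩
          rw [if_pos hq, if_pos this, h0, if_neg (by omega)]; ring
        · have hnot : ¬((p:ℕ)+1 ≤ t ∧ ii ((p:ℕ)+1) = ii t) := by
            rintro ⟨ha, hb⟩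
            have := le_kminus ii (by omega) (by omega) hb
            omega
          rw [if_neg hq, if_neg hnot, h0, if_neg (by omega)]; ring
      · by_cases hq : (p:ℕ)+1 = t
        · have h4 : (p:ℕ)+1 ≤ t ∧ ii ((p:ℕ)+1) = ii t := ⟨le_of_eq hq, by rw [hq]⟩
          rw [if_pos hq, if_pos h4, if_neg (by rintro ⟨ha, _⟩; omega)]; ring
        · rw [if_neg hq]
          by_cases hc : (p:ℕ)+1 ≤ t ∧ ii ((p:ℕ)+1) = ii t
          · have : (p:ℕ)+1 ≤ kminus ii t ∧ ii ((p:ℕ)+1) = ii (kminus ii t) := by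
              refine ⟨le_kminus ii (by omega) (by omega) hc.2, by rw [hc.2, h3]⟩
            rw [if_pos hc, if_pos this]; ring
          · have : ¬((p:ℕ)+1 ≤ kminus ii t ∧ ii ((p:ℕ)+1) = ii (kminus ii t)) := by
              rintro ⟨ha, hb⟩
              exact hc ⟨by omega, by rw [hb, h3]⟩
            rw [if_neg hc, if_neg this]; ring
    · rw [dif_neg h]
      have ht : t = 0 := by
        by_contra ht
        exact h (kminus_lt ii (by omega))
      subst ht
      simp only [eps]
      rw [if_neg (by omega), if_neg (by rintro ⟨ha, _⟩; omega)]

lemma sum_eps_apply (c : Fin m → ℤ) (p : Fin m) :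
    (∑ l : Fin m, c l • eps m ((l:ℕ)+1)) p = c p := by
  rw [Finset.sum_apply]
  rw [Finset.sum_eq_single p]
  · simp [eps]
  · intro b _ hb
    have : ¬((p:ℕ)+1 = (b:ℕ)+1) := by
      intro h; exact hb (Fin.ext (by omega)).symm
    simp [eps, this]
    intro h; exact absurd (Fin.ext h).symm hb
  · intro h; exact absurd (Finset.mem_univ _) h

lemma intMap_eps (s : ℕ) (hs : s ≤ m) :
    intMap ii m (eps m s) = intE ii m s := by
  rcases Nat.eq_zero_or_pos s with rfl | hs1
  · have h1 : eps m 0 = 0 := by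
      funext j; simp [eps]
    rw [intE]
    rw [dif_neg (by omega)]
    rw [h1, intMap]
    funext p
    simp
  · have hlt : s - 1 < m := by omega
    rw [intMap, Finset.sum_eq_single (⟨s-1, hlt⟩ : Fin m)]
    · have h2 : eps m s ⟨s-1, hlt⟩ = 1 := by
        simp [eps]; omega
      have h3 : ((⟨s-1, hlt⟩ : Fin m) : ℕ) + 1 = s := by simp; omega
      rw [h2, h3, one_smul]
    · intro b _ hb
      have : ¬((b:ℕ)+1 = s) := by
        intro h; exact hb (Fin.ext (by simp; omega))
      simp [eps, this]
    · intro h; exact absurd (Finset.mem_univ _) h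

lemma intMap_add (u v : Fin m → ℤ) :
    intMap ii m (u + v) = intMap ii m u + intMap ii m v := by
  simp [intMap, add_smul, Finset.sum_add_distrib]

lemma intMap_neg (u : Fin m → ℤ) : intMap ii m (-u) = -intMap ii m u := by
  simp [intMap, neg_smul, Finset.sum_neg_distrib]

lemma intMap_sub (u v : Fin m → ℤ) :
    intMap ii m (u - v) = intMap ii m u - intMap ii m v := by
  simp [intMap, sub_smul, Finset.sum_sub_distrib]

lemma intMap_smul (c : ℤ) (u : Fin m → ℤ) :
    intMap ii m (c • u) = c • intMap ii m u := by
  rw [intMap, intMap, Finset.smul_sum]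
  refine Finset.sum_congr rfl fun x _ => ?_
  rw [Pi.smul_apply, smul_eq_mul, mul_smul]

lemma intMap_sum {α : Type*} (s : Finset α) (f : α → Fin m → ℤ) :
    intMap ii m (∑ a ∈ s, f a) = ∑ a ∈ s, intMap ii m (f a) := by
  classical
  induction s using Finset.induction with
  | empty =>
      simp [intMap]
  | insert _ _ hx ih =>
      rw [Finset.sum_insert hx, intMap_add, ih, Finset.sum_insert hx]

lemma phiMap_eps (A : Fin n → Fin n → ℤ) {k : ℕ} (hk1 : 1 ≤ k) (hk2 : k ≤ m) :
    phiMap A ii m (eps m k) = phiE A ii m k := by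
  have hlt : k - 1 < m := by omega
  rw [phiMap, Finset.sum_eq_single (⟨k-1, hlt⟩ : Fin m)]
  · have h2 : eps m k ⟨k-1, hlt⟩ = 1 := by
      simp [eps]; omega
    have h3 : ((⟨k-1, hlt⟩ : Fin m) : ℕ) + 1 = k := by simp; omega
    rw [h2, h3, one_smul]
  · intro b _ hb
    have : ¬((b:ℕ)+1 = k) := by
      intro h; exact hb (Fin.ext (by simp; omega))
    simp [eps, this]
  · intro h; exact absurd (Finset.mem_univ _) h

end Aux3

/-- `∫_𝐢 (φ_𝐢(ε_k)) = -ε_k - ∑_{ℓ=1}^{k-1} a_{i_ℓ i_k} ε_ℓ`. -/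
theorem int_phi_eps {n m : ℕ} (hm : 1 ≤ m)
    (A : Fin n → Fin n → ℤ) (d : Fin n → ℤ)
    (hA : ∀ i, A i i = 2) (hd : ∀ i, 0 < d i)
    (hsym : ∀ i j, d i * A i j = d j * A j i)
    (ii : ℕ → Fin n) (k : ℕ) (hk1 : 1 ≤ k) (hk2 : k ≤ m) :
    intMap ii m (phiMap A ii m (eps m k)) =
      -(eps m k) - ∑ l : Fin m,
        (if (l:ℕ)+1 < k then A (ii ((l:ℕ)+1)) (ii k) else 0) • eps m ((l:ℕ)+1) := by
  rw [phiMap_eps ii A hk1 hk2, phiE]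
  rw [intMap_sub, intMap_sub, intMap_neg, intMap_sum, intMap_eps ii k hk2]
  have hkml := kminus_lt ii hk1
  rw [intMap_eps ii _ (by omega : kminus ii k ≤ m)]
  funext p
  have hterm : ∀ l : Fin m,
      intMap ii m ((if (l:ℕ)+1 < k ∧ k < kplus ii m ((l:ℕ)+1)
          then A (ii ((l:ℕ)+1)) (ii k) else 0) • eps m ((l:ℕ)+1)) p
        = (if (l:ℕ)+1 < k ∧ k < kplus ii m ((l:ℕ)+1)
          then A (ii ((l:ℕ)+1)) (ii k) else 0) *
            (if (p:ℕ)+1 ≤ (l:ℕ)+1 ∧ ii ((p:ℕ)+1) = ii ((l:ℕ)+1) then 1 else 0) := by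
    intro l
    rw [intMap_smul, Pi.smul_apply,
      intMap_eps ii _ (Nat.succ_le_of_lt l.isLt), intE_apply, smul_eq_mul]
  simp only [Pi.sub_apply, Pi.neg_apply, Finset.sum_apply, hterm]
  have hsumR : (∑ c : Fin m,
      ((if (c:ℕ)+1 < k then A (ii ((c:ℕ)+1)) (ii k) else 0) • eps m ((c:ℕ)+1)) p)
      = if (p:ℕ)+1 < k then A (ii ((p:ℕ)+1)) (ii k) else 0 := by
    have h := sum_eps_apply
      (fun c : Fin m => if (c:ℕ)+1 < k then A (ii ((c:ℕ)+1)) (ii k) else 0) p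
    rw [Finset.sum_apply] at h
    exact h
  rw [hsumR, intE_apply, intE_apply]
  simp only [eps]
  set q := (p:ℕ)+1 with hqdef
  have hq1 : 1 ≤ q := by omega
  have hqm : q ≤ m := Nat.succ_le_of_lt p.isLt
  rcases lt_trichotomy q k with hlt | heq | hgt
  · by_cases hcol : ii q = ii k
    · rw [if_pos ⟨le_of_lt hlt, hcol⟩]
      have hqkm : q ≤ kminus ii k := le_kminus ii hq1 hlt hcol
      rcases kminus_mem ii k with h0 | ⟨h1, h2, h3⟩
      · omega
      rw [if_pos ⟨hqkm, hcol.trans h3.symm⟩]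
      rw [Finset.sum_eq_zero (fun l _ => ?_), if_neg (by omega : ¬ q = k),
        if_pos hlt, hcol, hA]
      · ring
      · by_cases hC1 : (l:ℕ)+1 < k ∧ k < kplus ii m ((l:ℕ)+1)
        · by_cases hC2 : q ≤ (l:ℕ)+1 ∧ ii q = ii ((l:ℕ)+1)
          · exfalso
            have hkp : kplus ii m ((l:ℕ)+1) ≤ k :=
              kplus_le ii hC1.1 hk2 (by rw [← hcol, hC2.2])
            omega
          · rw [if_neg hC2, mul_zero]
        · rw [if_neg hC1, zero_mul]
    · rw [if_neg (fun h => hcol h.2)]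
      have hsec : ¬(q ≤ kminus ii k ∧ ii q = ii (kminus ii k)) := by
        rcases kminus_mem ii k with h0 | ⟨h1, h2, h3⟩
        · rintro ⟨ha, _⟩; omega
        · rintro ⟨_, hb⟩; exact hcol (hb.trans h3)
      rw [if_neg hsec]
      have hne : ({l | q ≤ l ∧ l < k ∧ ii l = ii q} : Set ℕ).Nonempty :=
        ⟨q, le_refl q, hlt, rfl⟩
      have hbdd : BddAbove ({l | q ≤ l ∧ l < k ∧ ii l = ii q} : Set ℕ) :=
        ⟨k, fun x hx => le_of_lt hx.2.1⟩
      obtain ⟨ht1, ht2, ht3⟩ := Nat.sSup_mem hne hbdd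
      set t0 := sSup ({l | q ≤ l ∧ l < k ∧ ii l = ii q} : Set ℕ) with ht0def
      have hmax : ∀ l, q ≤ l → l < k → ii l = ii q → l ≤ t0 :=
        fun l a b c => le_csSup hbdd ⟨a, b, c⟩
      have hlt0m : t0 - 1 < m := by omega
      have hsum : (∑ l : Fin m,
          (if (l:ℕ)+1 < k ∧ k < kplus ii m ((l:ℕ)+1)
            then A (ii ((l:ℕ)+1)) (ii k) else 0) *
          (if q ≤ (l:ℕ)+1 ∧ ii q = ii ((l:ℕ)+1) then 1 else 0))
          = A (ii q) (ii k) := by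
        rw [Finset.sum_eq_single (⟨t0-1, hlt0m⟩ : Fin m)]
        · have hco : ((⟨t0-1, hlt0m⟩ : Fin m) : ℕ) + 1 = t0 := by simp; omega
          rw [hco]
          have hkpl : k < kplus ii m t0 := by
            refine lt_kplus ii hk2 (fun p' hp1 hp2 hp3 => ?_)
            by_contra hcon
            have hpq : ii p' = ii q := hp3.trans ht3
            have hpk : p' ≠ k := fun h => hcol (h ▸ hpq).symm
            have := hmax p' (by omega) (by omega) hpq
            omega
          rw [if_pos ⟨ht2, hkpl⟩, if_pos ⟨ht1, ht3.symm⟩, ht3, mul_one]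
        · intro b _ hb
          by_cases hC1 : (b:ℕ)+1 < k ∧ k < kplus ii m ((b:ℕ)+1)
          · by_cases hC2 : q ≤ (b:ℕ)+1 ∧ ii q = ii ((b:ℕ)+1)
            · exfalso
              have hb1 : (b:ℕ)+1 ≠ t0 := fun h => hb (Fin.ext (by simp; omega))
              have hble : (b:ℕ)+1 ≤ t0 := hmax _ hC2.1 hC1.1 hC2.2.symm
              have hkp : kplus ii m ((b:ℕ)+1) ≤ t0 :=
                kplus_le ii (by omega) (by omega) (ht3.trans hC2.2)
              omega
            · rw [if_neg hC2, mul_zero]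
          · rw [if_neg hC1, zero_mul]
        · intro h; exact absurd (Finset.mem_univ _) h
      rw [hsum, if_neg (by omega : ¬ q = k), if_pos hlt]
      ring
  · rw [if_pos ⟨le_of_eq heq, by rw [heq]⟩,
      if_neg (by rintro ⟨ha, _⟩; omega : ¬(q ≤ kminus ii k ∧ _)),
      Finset.sum_eq_zero (fun l _ => ?_), if_pos heq,
      if_neg (by omega : ¬ q < k)]
    · ring
    · by_cases hC1 : (l:ℕ)+1 < k ∧ k < kplus ii m ((l:ℕ)+1)
      · rw [if_neg (by rintro ⟨ha, _⟩; omega : ¬(q ≤ (l:ℕ)+1 ∧ _)), mul_zero]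
      · rw [if_neg hC1, zero_mul]
  · rw [if_neg (by rintro ⟨ha, _⟩; omega : ¬(q ≤ k ∧ _)),
      if_neg (by rintro ⟨ha, _⟩; omega : ¬(q ≤ kminus ii k ∧ _)),
      Finset.sum_eq_zero (fun l _ => ?_), if_neg (by omega : ¬ q = k),
      if_neg (by omega : ¬ q < k)]
    · ring
    · by_cases hC1 : (l:ℕ)+1 < k ∧ k < kplus ii m ((l:ℕ)+1)
      · rw [if_neg (by rintro ⟨ha, _⟩; omega : ¬(q ≤ (l:ℕ)+1 ∧ _)), mul_zero]
      · rw [if_neg hC1, zero_mul]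
end

section
/- For every $k\in\mathbf{ex}$ and every $\ell\in\{1,\dots,m\}$ one has $\Lambda_\mathbf{i}\big(\varphi'_\mathbf{i}(\mathbf{b}^k),\ \varphi'_\mathbf{i}(\varepsilon_\ell)\big)=2\,d_{i_k}\,\delta_{k\ell}$ (compatibility of the pair $(\Lambda_\mathbf{i},\tilde B_\mathbf{i})$, where $\tilde B_\mathbf{i}$ is the matrix with columns $\mathbf{b}^k$, $k\in\mathbf{ex}$). -/
open Finset

variable {n : ℕ}

namespace CompatProof
open Finset

variable {n : ℕ} (A : Fin n → Fin n → ℤ) (d : Fin n → ℤ) (ii : ℕ → Fin n)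

lemma sum_delta (j : Fin n) (f : Fin n → ℤ) :
    ∑ a, (if a = j then 1 else 0) * f a = f j := by
  simp [ite_mul, Finset.sum_ite_eq']

lemma sum_delta' (j : Fin n) (f : Fin n → ℤ) :
    ∑ a, f a * (if a = j then 1 else 0) = f j := by
  simp [mul_ite, Finset.sum_ite_eq']

lemma pairL (x : QvLat n) (lam : PLat n) :
    pairQP A x lam = ∑ a, x a * ((∑ b, A a b * lam.1 b) + lam.2 a) := by
  unfold pairQP
  rw [← Finset.sum_add_distrib]
  refine Finset.sum_congr rfl fun a _ => ?_
  rw [mul_add, Finset.mul_sum]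
  congr 1
  exact Finset.sum_congr rfl fun b _ => by ring

lemma pair_coroot (j : Fin n) (lam : PLat n) :
    pairQP A (coroot j) lam = (∑ b, A j b * lam.1 b) + lam.2 j := by
  rw [pairL]; unfold coroot; rw [sum_delta]

lemma pair_alP (x : QvLat n) (j : Fin n) :
    pairQP A x (alP j) = ∑ a, x a * A a j := by
  rw [pairL]; unfold alP
  refine Finset.sum_congr rfl fun a _ => ?_
  simp only [Pi.zero_apply, add_zero]
  rw [sum_delta']

lemma pair_omP (x : QvLat n) (j : Fin n) :
    pairQP A x (omP j) = x j := by
  rw [pairL]; unfold omP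
  simp only [Pi.zero_apply, mul_zero, Finset.sum_const_zero, zero_add]
  rw [sum_delta']

lemma pair_coroot_alP (i j : Fin n) :
    pairQP A (coroot i) (alP j) = A i j := by
  rw [pair_alP]; unfold coroot; rw [sum_delta]

lemma pair_coroot_omP (i j : Fin n) :
    pairQP A (coroot i) (omP j) = if j = i then 1 else 0 := by
  rw [pair_omP]; rfl

lemma pair_sub_right (x : QvLat n) (l l' : PLat n) :
    pairQP A x (l - l') = pairQP A x l - pairQP A x l' := by
  simp only [pairL, Prod.fst_sub, Prod.snd_sub, Pi.sub_apply]
  rw [← Finset.sum_sub_distrib]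
  refine Finset.sum_congr rfl fun a _ => ?_
  simp only [mul_sub, Finset.sum_sub_distrib]
  ring

lemma pair_add_right (x : QvLat n) (l l' : PLat n) :
    pairQP A x (l + l') = pairQP A x l + pairQP A x l' := by
  simp only [pairL, Prod.fst_add, Prod.snd_add, Pi.add_apply]
  rw [← Finset.sum_add_distrib]
  refine Finset.sum_congr rfl fun a _ => ?_
  simp only [mul_add, Finset.sum_add_distrib]
  ring

lemma pair_smul_right (x : QvLat n) (c : ℤ) (l : PLat n) :
    pairQP A x (c • l) = c * pairQP A x l := by
  simp only [pairL, Prod.smul_fst, Prod.smul_snd, Pi.smul_apply, smul_eq_mul,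
    Finset.mul_sum]
  refine Finset.sum_congr rfl fun a _ => ?_
  have h1 : ∑ b, A a b * (c * l.1 b) = c * ∑ b, A a b * l.1 b := by
    rw [Finset.mul_sum]; exact Finset.sum_congr rfl fun b _ => by ring
  rw [h1]
  ring
lemma pair_neg_right (x : QvLat n) (l : PLat n) :
    pairQP A x (-l) = -pairQP A x l := by
  have := pair_smul_right A x (-1) l
  simpa using this

lemma pair_sub_left (x x' : QvLat n) (l : PLat n) :
    pairQP A (x - x') l = pairQP A x l - pairQP A x' l := by
  simp only [pairL, Pi.sub_apply, sub_mul, Finset.sum_sub_distrib]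

lemma pair_add_left (x x' : QvLat n) (l : PLat n) :
    pairQP A (x + x') l = pairQP A x l + pairQP A x' l := by
  simp only [pairL, Pi.add_apply, add_mul, Finset.sum_add_distrib]

lemma pair_smul_left (x : QvLat n) (c : ℤ) (l : PLat n) :
    pairQP A (c • x) l = c * pairQP A x l := by
  simp only [pairL, Pi.smul_apply, smul_eq_mul, Finset.mul_sum]
  exact Finset.sum_congr rfl fun a _ => by ring

lemma pair_neg_left (x : QvLat n) (l : PLat n) :
    pairQP A (-x) l = -pairQP A x l := by
  have := pair_smul_left A x (-1) l
  simpa using this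

lemma sP_eq (a : Fin n) (lam : PLat n) :
    sP A a lam = lam - pairQP A (coroot a) lam • alP a := by
  rw [pair_coroot]
  unfold sP alP
  refine Prod.ext ?_ ?_
  · funext j
    simp only [Prod.fst_sub, Prod.smul_fst, Pi.sub_apply, Pi.smul_apply, smul_eq_mul]
    split_ifs with h
    · subst h; ring
    · ring
  · simp only [Prod.snd_sub, Prod.smul_snd]
    funext j
    simp

lemma sQ_eq (a : Fin n) (x : QvLat n) :
    sQ A a x = x - pairQP A x (alP a) • coroot a := by
  rw [pair_alP]
  unfold sQ coroot
  funext j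
  simp only [Pi.sub_apply, Pi.smul_apply, smul_eq_mul]
  split_ifs with h
  · subst h
    rw [Finset.sum_congr rfl (fun k _ => (mul_comm (A k j) (x k)))]
    ring
  · ring

end CompatProof

namespace CompatProof
open Finset

variable {n : ℕ} (A : Fin n → Fin n → ℤ) (d : Fin n → ℤ) (ii : ℕ → Fin n)

lemma sP_sub (a : Fin n) (l l' : PLat n) :
    sP A a (l - l') = sP A a l - sP A a l' := by
  simp only [sP_eq, pair_sub_right, sub_smul]
  abel

lemma sP_smul (a : Fin n) (c : ℤ) (l : PLat n) :
    sP A a (c • l) = c • sP A a l := by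
  simp only [sP_eq, pair_smul_right, mul_smul, smul_sub]

lemma sP_neg (a : Fin n) (l : PLat n) : sP A a (-l) = -sP A a l := by
  have h := sP_smul A a (-1) l
  simpa using h

lemma sQ_sub (a : Fin n) (x x' : QvLat n) :
    sQ A a (x - x') = sQ A a x - sQ A a x' := by
  simp only [sQ_eq, pair_sub_left, sub_smul]
  abel

lemma sQ_smul (a : Fin n) (c : ℤ) (x : QvLat n) :
    sQ A a (c • x) = c • sQ A a x := by
  simp only [sQ_eq, pair_smul_left, mul_smul, smul_sub]

lemma sQ_neg (a : Fin n) (x : QvLat n) : sQ A a (-x) = -sQ A a x := by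
  have h := sQ_smul A a (-1) x
  simpa using h

lemma wP_sub (r : ℕ) (l l' : PLat n) :
    wP A ii r (l - l') = wP A ii r l - wP A ii r l' := by
  induction r generalizing l l' with
  | zero => rfl
  | succ r ih => simp only [wP, Function.comp_apply, sP_sub, ih]

lemma wP_smul (r : ℕ) (c : ℤ) (l : PLat n) :
    wP A ii r (c • l) = c • wP A ii r l := by
  induction r generalizing l with
  | zero => rfl
  | succ r ih => simp only [wP, Function.comp_apply, sP_smul, ih]

lemma wP_neg (r : ℕ) (l : PLat n) : wP A ii r (-l) = -wP A ii r l := by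
  induction r generalizing l with
  | zero => rfl
  | succ r ih => simp only [wP, Function.comp_apply, sP_neg, ih]

lemma wQ_sub (r : ℕ) (x x' : QvLat n) :
    wQ A ii r (x - x') = wQ A ii r x - wQ A ii r x' := by
  induction r generalizing x x' with
  | zero => rfl
  | succ r ih => simp only [wQ, Function.comp_apply, sQ_sub, ih]

lemma wQ_smul (r : ℕ) (c : ℤ) (x : QvLat n) :
    wQ A ii r (c • x) = c • wQ A ii r x := by
  induction r generalizing x with
  | zero => rfl
  | succ r ih => simp only [wQ, Function.comp_apply, sQ_smul, ih]

lemma wQ_neg (r : ℕ) (x : QvLat n) : wQ A ii r (-x) = -wQ A ii r x := by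
  induction r generalizing x with
  | zero => rfl
  | succ r ih => simp only [wQ, Function.comp_apply, sQ_neg, ih]

lemma sP_snd (a : Fin n) (l : PLat n) : (sP A a l).2 = l.2 := rfl

lemma wP_snd (r : ℕ) (l : PLat n) : (wP A ii r l).2 = l.2 := by
  induction r generalizing l with
  | zero => rfl
  | succ r ih => simp only [wP, Function.comp_apply, ih, sP_snd]

/-- special values of simple reflections -/
lemma sP_omP_self (a : Fin n) : sP A a (omP a) = omP a - alP a := by
  rw [sP_eq, pair_coroot_omP, if_pos rfl, one_smul]

lemma sP_omP_ne (a j : Fin n) (h : j ≠ a) : sP A a (omP j) = omP j := by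
  rw [sP_eq, pair_coroot_omP, if_neg h, zero_smul, sub_zero]

lemma sP_alP (a j : Fin n) : sP A a (alP j) = alP j - A a j • alP a := by
  rw [sP_eq, pair_coroot_alP]

lemma sP_alP_self (hA : ∀ i, A i i = 2) (a : Fin n) : sP A a (alP a) = -alP a := by
  rw [sP_alP, hA]
  rw [show ((2:ℤ) • alP a) = alP a + alP a by rw [two_smul]]
  abel

lemma sQ_coroot_self (hA : ∀ i, A i i = 2) (a : Fin n) :
    sQ A a (coroot a) = -coroot a := by
  rw [sQ_eq, pair_coroot_alP, hA]
  rw [show ((2:ℤ) • coroot a) = coroot a + coroot a by rw [two_smul]]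
  abel

/-- one-step invariance -/
lemma inv1 (hA : ∀ i, A i i = 2) (a : Fin n) (x : QvLat n) (lam : PLat n) :
    pairQP A (sQ A a x) (sP A a lam) = pairQP A x lam := by
  rw [sQ_eq, sP_eq, pair_sub_left, pair_sub_right, pair_sub_right,
    pair_smul_left, pair_smul_right, pair_smul_right, pair_smul_left,
    pair_coroot_alP, hA]
  ring

/-- full invariance -/
lemma wInv (hA : ∀ i, A i i = 2) (r : ℕ) (x : QvLat n) (lam : PLat n) :
    pairQP A (wQ A ii r x) (wP A ii r lam) = pairQP A x lam := by
  induction r generalizing x lam with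
  | zero => rfl
  | succ r ih =>
    simp only [wQ, wP, Function.comp_apply]
    rw [ih, inv1 A hA]

end CompatProof

namespace CompatProof
open Finset

variable {n : ℕ} (A : Fin n → Fin n → ℤ) (d : Fin n → ℤ) (ii : ℕ → Fin n)

/-- midword on `𝒫`: `vP a b = s_{i_{a+1}} ∘ ⋯ ∘ s_{i_b}` -/
def vP (A : Fin n → Fin n → ℤ) (ii : ℕ → Fin n) (a : ℕ) : ℕ → PLat n → PLat n
  | 0 => id
  | (b+1) => if b+1 ≤ a then id else vP A ii a b ∘ sP A (ii (b+1))

def vQ (A : Fin n → Fin n → ℤ) (ii : ℕ → Fin n) (a : ℕ) : ℕ → QvLat n → QvLat n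
  | 0 => id
  | (b+1) => if b+1 ≤ a then id else vQ A ii a b ∘ sQ A (ii (b+1))

lemma wP_decomp (a : ℕ) : ∀ b, a ≤ b → ∀ lam : PLat n,
    wP A ii b lam = wP A ii a (vP A ii a b lam) := by
  intro b
  induction b with
  | zero => intro h lam; interval_cases a; rfl
  | succ b ih =>
    intro h lam
    by_cases h2 : b+1 ≤ a
    · have : a = b+1 := le_antisymm h h2
      subst this
      simp only [vP, if_pos h2, id_eq]
    · have ha : a ≤ b := by omega
      simp only [wP, vP, if_neg h2, Function.comp_apply]
      rw [ih ha]

lemma wQ_decomp (a : ℕ) : ∀ b, a ≤ b → ∀ x : QvLat n,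
    wQ A ii b x = wQ A ii a (vQ A ii a b x) := by
  intro b
  induction b with
  | zero => intro h x; interval_cases a; rfl
  | succ b ih =>
    intro h x
    by_cases h2 : b+1 ≤ a
    · have : a = b+1 := le_antisymm h h2
      subst this
      simp only [vQ, if_pos h2, id_eq]
    · have ha : a ≤ b := by omega
      simp only [wQ, vQ, if_neg h2, Function.comp_apply]
      rw [ih ha]

lemma midInvQ (hA : ∀ i, A i i = 2) (a b : ℕ) (h : a ≤ b) (x : QvLat n) (lam : PLat n) :
    pairQP A (wQ A ii b x) (wP A ii a lam) = pairQP A (vQ A ii a b x) lam := by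
  rw [wQ_decomp A ii a b h, wInv A ii hA]

lemma sQ_apply_ne (c : Fin n) (x : QvLat n) (j : Fin n) (h : j ≠ c) :
    sQ A c x j = x j := by
  unfold sQ; rw [if_neg h]

lemma vQ_apply_ne (a : ℕ) (j : Fin n) : ∀ b, (∀ r, a < r → r ≤ b → ii r ≠ j) →
    ∀ x : QvLat n, vQ A ii a b x j = x j := by
  intro b
  induction b with
  | zero => intro _ x; rfl
  | succ b ih =>
    intro hj x
    by_cases h2 : b+1 ≤ a
    · simp only [vQ, if_pos h2, id_eq]
    · simp only [vQ, if_neg h2, Function.comp_apply]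
      rw [ih (fun r h1 h2 => hj r h1 (by omega))]
      exact sQ_apply_ne A (ii (b+1)) x j (Ne.symm (hj (b+1) (by omega) le_rfl))

lemma vP_omP (a : ℕ) (j : Fin n) : ∀ b, (∀ r, a < r → r ≤ b → ii r ≠ j) →
    vP A ii a b (omP j) = omP j := by
  intro b
  induction b with
  | zero => intro _; rfl
  | succ b ih =>
    intro hj
    by_cases h2 : b+1 ≤ a
    · simp only [vP, if_pos h2, id_eq]
    · simp only [vP, if_neg h2, Function.comp_apply]
      rw [sP_omP_ne A (ii (b+1)) j (fun h => (hj (b+1) (by omega) le_rfl) h.symm),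
        ih (fun r h1 h2 => hj r h1 (by omega))]

lemma wP_omP_stable (a b : ℕ) (h : a ≤ b) (j : Fin n)
    (hj : ∀ r, a < r → r ≤ b → ii r ≠ j) :
    wP A ii b (omP j) = wP A ii a (omP j) := by
  rw [wP_decomp A ii a b h, vP_omP A ii a j b hj]

/- ### kplus / kminus facts -/
section pm
variable (m : ℕ)

lemma kplus_mem (k : ℕ) :
    kplus ii m k ∈ ({l | k < l ∧ l ≤ m ∧ ii l = ii k} ∪ {m+1} : Set ℕ) :=
  Nat.sInf_mem ⟨m+1, Or.inr rfl⟩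

lemma kplus_le_succ (k : ℕ) : kplus ii m k ≤ m + 1 :=
  Nat.sInf_le (Or.inr rfl)

lemma kplus_gt (k : ℕ) (hk : k ≤ m) : k < kplus ii m k := by
  rcases kplus_mem ii m k with h | h
  · exact h.1
  · simp only [Set.mem_singleton_iff] at h; omega

lemma kplus_ii (k : ℕ) (h : kplus ii m k ≤ m) : ii (kplus ii m k) = ii k := by
  rcases kplus_mem ii m k with h' | h'
  · exact h'.2.2
  · simp only [Set.mem_singleton_iff] at h'; omega

lemma kplus_le_of (k r : ℕ) (h1 : k < r) (h2 : r ≤ m) (h3 : ii r = ii k) :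
    kplus ii m k ≤ r :=
  Nat.sInf_le (Or.inl ⟨h1, h2, h3⟩)

lemma kminus_bdd (k : ℕ) :
    BddAbove ({l | 1 ≤ l ∧ l < k ∧ ii l = ii k} ∪ {0} : Set ℕ) := by
  refine ⟨k, fun x hx => ?_⟩
  rcases hx with h | h
  · exact le_of_lt h.2.1
  · simp only [Set.mem_singleton_iff] at h; omega

lemma kminus_mem (k : ℕ) :
    kminus ii k ∈ ({l | 1 ≤ l ∧ l < k ∧ ii l = ii k} ∪ {0} : Set ℕ) :=
  Nat.sSup_mem ⟨0, Or.inr rfl⟩ (kminus_bdd ii k)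

lemma kminus_lt (k : ℕ) (hk : 1 ≤ k) : kminus ii k < k := by
  rcases kminus_mem ii k with h | h
  · exact h.2.1
  · simp only [Set.mem_singleton_iff] at h; omega

lemma kminus_ii (k : ℕ) (h : 1 ≤ kminus ii k) : ii (kminus ii k) = ii k := by
  rcases kminus_mem ii k with h' | h'
  · exact h'.2.2
  · simp only [Set.mem_singleton_iff] at h'; omega

lemma kminus_ge (k r : ℕ) (h1 : 1 ≤ r) (h2 : r < k) (h3 : ii r = ii k) :
    r ≤ kminus ii k :=
  le_csSup (kminus_bdd ii k) (Or.inl ⟨h1, h2, h3⟩)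

lemma minus_plus (l : ℕ) (h1 : 1 ≤ kminus ii l) (h2 : l ≤ m) :
    kplus ii m (kminus ii l) = l := by
  have hl1 : 1 ≤ l := by
    rcases kminus_mem ii l with h' | h'
    · simp only [Set.mem_setOf_eq] at h'; omega
    · simp only [Set.mem_singleton_iff] at h'; omega
  set q := kminus ii l with hq
  have hql : q < l := kminus_lt ii l hl1
  have hii : ii q = ii l := kminus_ii ii l h1
  have hle : kplus ii m q ≤ l := kplus_le_of ii m q l hql h2 hii.symm
  rcases lt_or_eq_of_le hle with hlt | heq
  · exfalso
    set p := kplus ii m q with hp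
    have hpm : p ≤ m := by omega
    have hqp : q < p := kplus_gt ii m q (le_trans hql.le h2)
    have hpii : ii p = ii q := kplus_ii ii m q hpm
    have : p ≤ kminus ii l := kminus_ge ii l p (by omega) hlt (hpii.trans hii)
    omega
  · exact heq

lemma plus_minus (k : ℕ) (hk1 : 1 ≤ k) (h : kplus ii m k ≤ m) :
    kminus ii (kplus ii m k) = k := by
  have hkm : k ≤ m := by
    rcases kplus_mem ii m k with h' | h'
    · simp only [Set.mem_setOf_eq] at h'; omega
    · simp only [Set.mem_singleton_iff] at h'; omega
  set p := kplus ii m k with hp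
  have hkp : k < p := kplus_gt ii m k hkm
  have hpii : ii p = ii k := kplus_ii ii m k h
  have hge : k ≤ kminus ii p := kminus_ge ii p k hk1 hkp hpii.symm
  rcases lt_or_eq_of_le hge with hlt | heq
  · exfalso
    set r := kminus ii p with hr
    have hrp : r < p := kminus_lt ii p (by omega)
    have hrii : ii r = ii p := kminus_ii ii p (by omega)
    have : p ≤ r := kplus_le_of ii m k r hlt (le_trans hrp.le h) (hrii.trans hpii)
    omega
  · exact heq.symm

end pm
end CompatProof

namespace CompatProof
open Finset

variable {n : ℕ} (A : Fin n → Fin n → ℤ) (d : Fin n → ℤ) (ii : ℕ → Fin n)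

/-- the key ω-identity: `w_l ω_{i_l} = w_{l⁻} ω_{i_l} - w_{l-1} α_{i_l}` -/
lemma W1 (l : ℕ) (hl : 1 ≤ l) :
    wP A ii l (omP (ii l)) =
      wP A ii (kminus ii l) (omP (ii l)) - wP A ii (l-1) (alP (ii l)) := by
  obtain ⟨l', rfl⟩ : ∃ l', l = l' + 1 := ⟨l - 1, by omega⟩
  have h1 : wP A ii (l'+1) (omP (ii (l'+1))) =
      wP A ii l' (omP (ii (l'+1))) - wP A ii l' (alP (ii (l'+1))) := by
    show wP A ii l' (sP A (ii (l'+1)) (omP (ii (l'+1)))) = _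
    rw [sP_omP_self, wP_sub]
  rw [h1]
  have h2 : wP A ii l' (omP (ii (l'+1))) =
      wP A ii (kminus ii (l'+1)) (omP (ii (l'+1))) := by
    refine wP_omP_stable A ii (kminus ii (l'+1)) l'
      (by have := kminus_lt ii (l'+1) (by omega); omega) _ (fun r h1 h2 hr => ?_)
    have : r ≤ kminus ii (l'+1) := kminus_ge ii (l'+1) r (by omega) (by omega) hr
    omega
  rw [h2]
  norm_num

lemma wP_alP_succ (b : ℕ) (j : Fin n) :
    wP A ii (b+1) (alP j) =
      wP A ii b (alP j) - A (ii (b+1)) j • wP A ii b (alP (ii (b+1))) := by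
  show wP A ii b (sP A (ii (b+1)) (alP j)) = _
  rw [sP_alP, wP_sub, wP_smul]

/-- scalar abbreviations -/
def gg (A : Fin n → Fin n → ℤ) (ii : ℕ → Fin n) (s l : ℕ) : ℤ :=
  pairQP A (wQ A ii s (coroot (ii s))) (wP A ii l (omP (ii l)))

noncomputable def g0 (A : Fin n → Fin n → ℤ) (ii : ℕ → Fin n) (s l : ℕ) : ℤ :=
  pairQP A (wQ A ii s (coroot (ii s))) (wP A ii (kminus ii l) (omP (ii l)))

def hh (A : Fin n → Fin n → ℤ) (ii : ℕ → Fin n) (s k r : ℕ) : ℤ :=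
  pairQP A (wQ A ii s (coroot (ii s))) (wP A ii r (alP (ii k)))

lemma xs_eq (hA : ∀ i, A i i = 2) (s : ℕ) (hs : 1 ≤ s) :
    wQ A ii s (coroot (ii s)) = -(wQ A ii (s-1) (coroot (ii s))) := by
  obtain ⟨s', rfl⟩ : ∃ s', s = s' + 1 := ⟨s - 1, by omega⟩
  show wQ A ii s' (sQ A (ii (s'+1)) (coroot (ii (s'+1)))) = _
  rw [sQ_coroot_self A hA, wQ_neg]
  norm_num

lemma gg_diag (hA : ∀ i, A i i = 2) (s : ℕ) : gg A ii s s = 1 := by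
  unfold gg
  rw [wInv A ii hA, pair_coroot_omP, if_pos rfl]

lemma hh_base (hA : ∀ i, A i i = 2) (s k : ℕ) (hs : 1 ≤ s) :
    hh A ii s k (s-1) = -A (ii s) (ii k) := by
  unfold hh
  rw [xs_eq A ii hA s hs, pair_neg_left, wInv A ii hA, pair_coroot_alP]

lemma g0_far (hA : ∀ i, A i i = 2) (s l : ℕ) (hs1 : 1 ≤ s) (hsl : s ≤ l)
    (hml : kminus ii l < s) : g0 A ii s l = if l = s then -1 else 0 := by
  unfold g0
  rw [xs_eq A ii hA s hs1, pair_neg_left,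
    midInvQ A ii hA (kminus ii l) (s-1) (by omega) _ _, pair_omP]
  rw [vQ_apply_ne A ii (kminus ii l) (ii l) (s-1) (fun r h1 h2 hr => ?_) _]
  · unfold coroot
    by_cases h : l = s
    · subst h; simp
    · have hne : ii l ≠ ii s := fun hll => by
        have : s ≤ kminus ii l := kminus_ge ii l s hs1 (by omega) hll.symm
        omega
      rw [if_neg hne, if_neg h]
      norm_num
  · have : r ≤ kminus ii l := kminus_ge ii l r (by omega) (by omega) hr
    omega

lemma g0_g (s l : ℕ) (h1 : 1 ≤ kminus ii l) :
    g0 A ii s l = gg A ii s (kminus ii l) := by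
  unfold g0 gg
  rw [kminus_ii ii l h1]

lemma gW1 (s l : ℕ) (hl : 1 ≤ l) :
    gg A ii s l = g0 A ii s l -
      pairQP A (wQ A ii s (coroot (ii s))) (wP A ii (l-1) (alP (ii l))) := by
  unfold gg g0
  rw [W1 A ii l hl, pair_sub_right]

lemma hh_rec (s k r : ℕ) :
    hh A ii s k (r+1) = hh A ii s k r -
      A (ii (r+1)) (ii k) * (g0 A ii s (r+1) - gg A ii s (r+1)) := by
  have h1 := gW1 A ii s (r+1) (by omega)
  simp only [Nat.add_sub_cancel] at h1
  unfold hh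
  rw [wP_alP_succ, pair_sub_right, pair_smul_right]
  have : pairQP A (wQ A ii s (coroot (ii s))) (wP A ii r (alP (ii (r+1)))) =
      g0 A ii s (r+1) - gg A ii s (r+1) := by
    unfold gg g0 at h1 ⊢
    omega
  rw [this]

lemma hh_tel (s k : ℕ) (hs : 1 ≤ s) : ∀ b, s - 1 ≤ b →
    hh A ii s k b = hh A ii s k (s-1) -
      ∑ l ∈ Icc s b, A (ii l) (ii k) * (g0 A ii s l - gg A ii s l) := by
  intro b
  induction b with
  | zero =>
    intro h
    have : s = 1 := by omega
    subst this
    simp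
  | succ b ih =>
    intro h
    by_cases h2 : s - 1 = b + 1
    · rw [← h2]
      rw [show Icc s (s-1) = ∅ by rw [Finset.Icc_eq_empty_iff]; omega]
      simp
    · have hb : s - 1 ≤ b := by omega
      rw [Finset.sum_Icc_succ_top (by omega : s ≤ b + 1), hh_rec, ih hb]
      ring

end CompatProof

namespace CompatProof
open Finset

variable {n : ℕ} (A : Fin n → Fin n → ℤ) (d : Fin n → ℤ) (ii : ℕ → Fin n)

lemma reindex (m : ℕ) (s k : ℕ) (hs1 : 1 ≤ s) (hk : k ≤ m) (hsk : s < k) :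
    ∑ l ∈ (Icc s (k-1)).filter (fun l => s ≤ kminus ii l),
        A (ii l) (ii k) * gg A ii s (kminus ii l)
      = ∑ p ∈ (Icc s (k-1)).filter (fun p => kplus ii m p ≤ k-1),
        A (ii p) (ii k) * gg A ii s p := by
  refine Finset.sum_nbij' (fun l => kminus ii l) (fun p => kplus ii m p)
    ?_ ?_ ?_ ?_ ?_
  · intro l hl
    simp only [Finset.mem_filter, Finset.mem_Icc] at hl ⊢
    obtain ⟨⟨hl1, hl2⟩, hl3⟩ := hl
    have hlt : kminus ii l < l := kminus_lt ii l (by omega)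
    have hpl : kplus ii m (kminus ii l) = l := minus_plus ii m l (by omega) (by omega)
    refine ⟨⟨hl3, by omega⟩, by omega⟩
  · intro p hp
    simp only [Finset.mem_filter, Finset.mem_Icc] at hp ⊢
    obtain ⟨⟨hp1, hp2⟩, hp3⟩ := hp
    have hgt : p < kplus ii m p := kplus_gt ii m p (by omega)
    have hmp : kminus ii (kplus ii m p) = p := plus_minus ii m p (by omega) (by omega)
    refine ⟨⟨by omega, by omega⟩, by omega⟩
  · intro l hl
    simp only [Finset.mem_filter, Finset.mem_Icc] at hl
    exact minus_plus ii m l (by omega) (by omega)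
  · intro p hp
    simp only [Finset.mem_filter, Finset.mem_Icc] at hp
    exact plus_minus ii m p (by omega) (by omega)
  · intro l hl
    simp only [Finset.mem_filter, Finset.mem_Icc] at hl
    have h1 : 1 ≤ kminus ii l := by omega
    rw [kminus_ii ii l h1]

/-- the key "φ' ∘ φ = id" scalar identity -/
lemma star (hA : ∀ i, A i i = 2) (m k s : ℕ) (hk1 : 1 ≤ k) (hk : k ≤ m)
    (hs1 : 1 ≤ s) (hs : s ≤ m) :
    ∑ l ∈ Icc 1 m, ((if l = k then (1:ℤ) else 0) + (if l = kminus ii k then 1 else 0)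
        + (if l < k ∧ k < kplus ii m l then A (ii l) (ii k) else 0))
        * (if s ≤ l then gg A ii s l else 0)
      = if s = k then 1 else 0 := by
  have hsplit : ∀ l ∈ Icc 1 m,
      ((if l = k then (1:ℤ) else 0) + (if l = kminus ii k then 1 else 0)
        + (if l < k ∧ k < kplus ii m l then A (ii l) (ii k) else 0))
        * (if s ≤ l then gg A ii s l else 0)
      = (if l = k then (if s ≤ l then gg A ii s l else 0) else 0)
        + (if l = kminus ii k then (if s ≤ l then gg A ii s l else 0) else 0)
        + (if s ≤ l ∧ l < k ∧ k < kplus ii m l then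
            A (ii l) (ii k) * gg A ii s l else 0) := by
    intro l _
    have hlt := kminus_lt ii k hk1
    split_ifs <;> try omega
    all_goals ring
  rw [Finset.sum_congr rfl hsplit]
  rw [Finset.sum_add_distrib, Finset.sum_add_distrib]
  rw [Finset.sum_ite_eq' (Icc 1 m) k, Finset.sum_ite_eq' (Icc 1 m) (kminus ii k)]
  have hkmem : k ∈ Icc 1 m := by simp only [Finset.mem_Icc]; omega
  rw [if_pos hkmem]
  -- the third sum as a filtered sum
  have h3eq : ∑ l ∈ Icc 1 m, (if s ≤ l ∧ l < k ∧ k < kplus ii m l then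
      A (ii l) (ii k) * gg A ii s l else 0)
      = ∑ l ∈ (Icc s (k-1)).filter (fun l => k < kplus ii m l),
          A (ii l) (ii k) * gg A ii s l := by
    rw [← Finset.sum_filter]
    refine Finset.sum_congr ?_ (fun _ _ => rfl)
    ext l
    simp only [Finset.mem_filter, Finset.mem_Icc]
    omega
  rw [h3eq]
  rcases lt_trichotomy s k with hsk | hsk | hsk
  · -- main case s < k
    have hsnek : ¬ s = k := by omega
    have hslek : s ≤ k := by omega
    rw [if_neg hsnek, if_pos hslek]
    -- the kminus-term
    have hKmm : kminus ii k < k := kminus_lt ii k hk1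
    -- telescoped h identity
    have htel := hh_tel A ii s k hs1 (k-1) (by omega)
    have hbase := hh_base A ii hA s k hs1
    have hgk := gW1 A ii s k (by omega)
    -- decompose the g0 sum
    have hg0split := Finset.sum_filter_add_sum_filter_not (Icc s (k-1))
      (fun l => s ≤ kminus ii l) (fun l => A (ii l) (ii k) * g0 A ii s l)
    have hg0a : ∑ l ∈ (Icc s (k-1)).filter (fun l => s ≤ kminus ii l),
        A (ii l) (ii k) * g0 A ii s l
        = ∑ p ∈ (Icc s (k-1)).filter (fun p => kplus ii m p ≤ k-1),
          A (ii p) (ii k) * gg A ii s p := by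
      rw [← reindex A ii m s k hs1 hk hsk]
      refine Finset.sum_congr rfl (fun l hl => ?_)
      simp only [Finset.mem_filter, Finset.mem_Icc] at hl
      rw [g0_g A ii s l (by omega)]
    have hg0b : ∑ l ∈ (Icc s (k-1)).filter (fun l => ¬ s ≤ kminus ii l),
        A (ii l) (ii k) * g0 A ii s l = -(A (ii s) (ii k)) := by
      have hcongr : ∀ l ∈ (Icc s (k-1)).filter (fun l => ¬ s ≤ kminus ii l),
          A (ii l) (ii k) * g0 A ii s l
          = if l = s then -(A (ii l) (ii k)) else 0 := by
        intro l hl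
        simp only [Finset.mem_filter, Finset.mem_Icc] at hl
        rw [g0_far A ii hA s l hs1 (by omega) (by omega)]
        by_cases h : l = s <;> simp [h]
      rw [Finset.sum_congr rfl hcongr, Finset.sum_ite_eq']
      rw [if_pos]
      simp only [Finset.mem_filter, Finset.mem_Icc]
      have := kminus_lt ii s hs1
      omega
    -- decompose the gg sum
    have hggsplit := Finset.sum_filter_add_sum_filter_not (Icc s (k-1))
      (fun l => kplus ii m l ≤ k-1) (fun l => A (ii l) (ii k) * gg A ii s l)
    have hggb : ∑ l ∈ (Icc s (k-1)).filter (fun l => ¬ kplus ii m l ≤ k-1),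
        A (ii l) (ii k) * gg A ii s l
        = (if s ≤ kminus ii k then 2 * gg A ii s (kminus ii k) else 0)
          + ∑ l ∈ (Icc s (k-1)).filter (fun l => k < kplus ii m l),
            A (ii l) (ii k) * gg A ii s l := by
      have hsplit2 : (Icc s (k-1)).filter (fun l => ¬ kplus ii m l ≤ k-1)
          = ((Icc s (k-1)).filter (fun l => kplus ii m l = k)) ∪
            ((Icc s (k-1)).filter (fun l => k < kplus ii m l)) := by
        ext l
        simp only [Finset.mem_filter, Finset.mem_Icc, Finset.mem_union]
        constructor
        · rintro ⟨h1, h2⟩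
          have := kplus_gt ii m l (by omega)
          omega
        · rintro (⟨h1, h2⟩ | ⟨h1, h2⟩) <;> exact ⟨h1, by omega⟩
      have hdisj : Disjoint ((Icc s (k-1)).filter (fun l => kplus ii m l = k))
          ((Icc s (k-1)).filter (fun l => k < kplus ii m l)) := by
        rw [Finset.disjoint_left]
        intro a ha hb
        simp only [Finset.mem_filter] at ha hb
        omega
      rw [hsplit2, Finset.sum_union hdisj]
      congr 1
      have hset : (Icc s (k-1)).filter (fun l => kplus ii m l = k)
          = if s ≤ kminus ii k then {kminus ii k} else ∅ := by
        ext l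
        simp only [Finset.mem_filter, Finset.mem_Icc]
        split_ifs with hKm
        · simp only [Finset.mem_singleton]
          constructor
          · rintro ⟨⟨h1, h2⟩, h3⟩
            have : kminus ii (kplus ii m l) = l := plus_minus ii m l (by omega) (by omega)
            rw [h3] at this
            omega
          · intro h
            subst h
            have : kplus ii m (kminus ii k) = k := minus_plus ii m k (by omega) hk
            exact ⟨⟨hKm, by omega⟩, this⟩
        · simp only [Finset.notMem_empty, iff_false]
          rintro ⟨⟨h1, h2⟩, h3⟩
          have : kminus ii (kplus ii m l) = l := plus_minus ii m l (by omega) (by omega)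
          rw [h3] at this
          omega
      rw [hset]
      split_ifs with hKm
      · rw [Finset.sum_singleton]
        have h1 : 1 ≤ kminus ii k := by omega
        rw [kminus_ii ii k h1, hA]
      · simp
    -- now the scalar algebra
    set Km := kminus ii k with hKmdef
    set S3 := ∑ l ∈ (Icc s (k-1)).filter (fun l => k < kplus ii m l),
      A (ii l) (ii k) * gg A ii s l with hS3def
    set Sig0 := ∑ p ∈ (Icc s (k-1)).filter (fun p => kplus ii m p ≤ k-1),
      A (ii p) (ii k) * gg A ii s p with hSig0def
    have hsum_g0 : ∑ l ∈ Icc s (k-1), A (ii l) (ii k) * g0 A ii s l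
        = Sig0 - A (ii s) (ii k) := by
      rw [← hg0split, hg0a, hg0b]
      ring
    have hsum_gg : ∑ l ∈ Icc s (k-1), A (ii l) (ii k) * gg A ii s l
        = Sig0 + ((if s ≤ Km then 2 * gg A ii s Km else 0) + S3) := by
      rw [← hggsplit, hggb]
    have hdiff : ∑ l ∈ Icc s (k-1), A (ii l) (ii k) * (g0 A ii s l - gg A ii s l)
        = ∑ l ∈ Icc s (k-1), A (ii l) (ii k) * g0 A ii s l
          - ∑ l ∈ Icc s (k-1), A (ii l) (ii k) * gg A ii s l := by
      rw [← Finset.sum_sub_distrib]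
      exact Finset.sum_congr rfl (fun l _ => by ring)
    have hhk1 : hh A ii s k (k-1)
        = (if s ≤ Km then 2 * gg A ii s Km else 0) + S3 := by
      rw [htel, hbase, hdiff, hsum_g0, hsum_gg]
      ring
    -- kminus-term value
    have hKmterm : (if Km ∈ Icc 1 m then (if s ≤ Km then gg A ii s Km else 0) else 0)
        = if s ≤ Km then gg A ii s Km else 0 := by
      by_cases hKm : s ≤ Km
      · rw [if_pos (by simp only [Finset.mem_Icc]; omega)]
      · simp [hKm]
    rw [hKmterm]
    -- final value of gg s k
    have hggk : gg A ii s k = g0 A ii s k - hh A ii s k (k-1) := hgk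
    rw [hggk, hhk1]
    by_cases hKm : s ≤ Km
    · rw [if_pos hKm, if_pos hKm, g0_g A ii s k (by omega), ← hKmdef]
      ring
    · rw [if_neg hKm, if_neg hKm, g0_far A ii hA s k hs1 (by omega) (by omega)]
      have hknes : ¬ k = s := by omega
      rw [if_neg hknes]
      ring
  · -- case s = k
    subst hsk
    rw [if_pos rfl, if_pos (le_refl s), gg_diag A ii hA]
    have h2 : (if kminus ii s ∈ Icc 1 m then
        (if s ≤ kminus ii s then gg A ii s (kminus ii s) else 0) else 0) = 0 := by
      have := kminus_lt ii s hs1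
      split_ifs with h1 h2
      · omega
      · rfl
      · rfl
    rw [h2]
    have h3 : ∑ l ∈ (Icc s (s-1)).filter (fun l => s < kplus ii m l),
        A (ii l) (ii s) * gg A ii s l = 0 := by
      rw [show Icc s (s-1) = ∅ by rw [Finset.Icc_eq_empty_iff]; omega]
      simp
    rw [h3]
    ring
  · -- case s > k
    have hsnek : ¬ s = k := by omega
    have hnsk : ¬ s ≤ k := by omega
    rw [if_neg hsnek, if_neg hnsk]
    have h2 : (if kminus ii k ∈ Icc 1 m then
        (if s ≤ kminus ii k then gg A ii s (kminus ii k) else 0) else 0) = 0 := by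
      have := kminus_lt ii k hk1
      split_ifs with h1 h2
      · omega
      · rfl
      · rfl
    rw [h2]
    have h3 : ∑ l ∈ (Icc s (k-1)).filter (fun l => k < kplus ii m l),
        A (ii l) (ii k) * gg A ii s l = 0 := by
      rw [show Icc s (k-1) = ∅ by rw [Finset.Icc_eq_empty_iff]; omega]
      simp
    rw [h3]
    ring

end CompatProof

namespace CompatProof
open Finset

variable {n : ℕ} (A : Fin n → Fin n → ℤ) (d : Fin n → ℤ) (ii : ℕ → Fin n)

def nu (d : Fin n → ℤ) (mu : PLat n) : QvLat n := fun j => d j * mu.1 j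

lemma pairAl_eq (mu lam : PLat n) :
    pairAl A d mu lam = pairQP A (nu d mu) lam := by
  unfold pairAl
  rw [pairL]
  simp only [pair_coroot, nu]
  exact Finset.sum_congr rfl fun j _ => by ring

lemma nu_sP (hsym : ∀ i j, d i * A i j = d j * A j i) (a : Fin n) (mu : PLat n)
    (h2 : mu.2 = 0) : nu d (sP A a mu) = sQ A a (nu d mu) := by
  funext j
  unfold nu sP sQ
  simp only
  split_ifs with h
  · subst h
    rw [h2]
    simp only [Pi.zero_apply, add_zero]
    rw [mul_sub, Finset.mul_sum]
    congr 1
    refine Finset.sum_congr rfl fun p _ => ?_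
    linear_combination mu.1 p * hsym j p
  · rfl

lemma nu_wP (hsym : ∀ i j, d i * A i j = d j * A j i) (r : ℕ) (mu : PLat n)
    (h2 : mu.2 = 0) : nu d (wP A ii r mu) = wQ A ii r (nu d mu) := by
  induction r generalizing mu with
  | zero => rfl
  | succ r ih =>
    show nu d (wP A ii r (sP A (ii (r+1)) mu)) = wQ A ii r (sQ A (ii (r+1)) (nu d mu))
    rw [ih (sP A (ii (r+1)) mu) (by rw [sP_snd]; exact h2), nu_sP A d hsym _ _ h2]

lemma pairAl_wInv (hA : ∀ i, A i i = 2) (hsym : ∀ i j, d i * A i j = d j * A j i)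
    (r : ℕ) (mu lam : PLat n) (h2 : mu.2 = 0) :
    pairAl A d (wP A ii r mu) (wP A ii r lam) = pairAl A d mu lam := by
  rw [pairAl_eq, nu_wP A d ii hsym r mu h2, wInv A ii hA, ← pairAl_eq]

lemma nu_alP (j : Fin n) : nu d (alP j) = d j • coroot j := by
  funext p
  unfold nu alP coroot
  simp only [Pi.smul_apply, smul_eq_mul]
  split_ifs with h
  · rw [h]
  · ring

lemma pairAl_alP_omP (j j' : Fin n) :
    pairAl A d (alP j) (omP j') = d j * (if j' = j then 1 else 0) := by
  rw [pairAl_eq, nu_alP, pair_smul_left, pair_coroot_omP]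

/-- the G-function -/
noncomputable def GG (A : Fin n → Fin n → ℤ) (d : Fin n → ℤ) (ii : ℕ → Fin n)
    (k l r : ℕ) : ℤ :=
  pairAl A d (wP A ii r (alP (ii k))) (wP A ii l (omP (ii l)))

lemma pairAl_sub_left (mu mu' lam : PLat n) :
    pairAl A d (mu - mu') lam = pairAl A d mu lam - pairAl A d mu' lam := by
  unfold pairAl
  simp only [Prod.fst_sub, Pi.sub_apply, sub_mul, Finset.sum_sub_distrib]

lemma pairAl_smul_left (c : ℤ) (mu lam : PLat n) :
    pairAl A d (c • mu) lam = c * pairAl A d mu lam := by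
  unfold pairAl
  simp only [Prod.smul_fst, Pi.smul_apply, smul_eq_mul, Finset.mul_sum]
  exact Finset.sum_congr rfl fun j _ => by ring

lemma pairAl_neg_left (mu lam : PLat n) :
    pairAl A d (-mu) lam = -pairAl A d mu lam := by
  have h := pairAl_smul_left A d (-1) mu lam
  simpa using h

lemma GG_diff (hA : ∀ i, A i i = 2) (hsym : ∀ i j, d i * A i j = d j * A j i)
    (k l s : ℕ) (hs : 1 ≤ s) :
    GG A d ii k l s - GG A d ii k l (s-1)
      = (d (ii s) * A (ii s) (ii k)) * gg A ii s l := by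
  obtain ⟨s', rfl⟩ : ∃ s', s = s' + 1 := ⟨s - 1, by omega⟩
  simp only [Nat.add_sub_cancel]
  unfold GG
  rw [wP_alP_succ, pairAl_sub_left, pairAl_smul_left]
  have hstep : pairAl A d (wP A ii s' (alP (ii (s'+1)))) (wP A ii l (omP (ii l)))
      = -(d (ii (s'+1)) * gg A ii (s'+1) l) := by
    rw [pairAl_eq, nu_wP A d ii hsym _ _ rfl, nu_alP, wQ_smul, pair_smul_left]
    unfold gg
    rw [xs_eq A ii hA (s'+1) (by omega)]
    simp only [Nat.add_sub_cancel]
    rw [pair_neg_left]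
    ring
  rw [hstep]
  ring

lemma GG_flip (hA : ∀ i, A i i = 2) (k l r : ℕ) (hr : 1 ≤ r) (hii : ii r = ii k) :
    GG A d ii k l r = -GG A d ii k l (r-1) := by
  obtain ⟨r', rfl⟩ : ∃ r', r = r' + 1 := ⟨r - 1, by omega⟩
  simp only [Nat.add_sub_cancel]
  unfold GG
  have h1 : wP A ii (r'+1) (alP (ii k)) = wP A ii r' (-alP (ii k)) := by
    show wP A ii r' (sP A (ii (r'+1)) (alP (ii k))) = _
    rw [← hii, sP_alP_self A hA]
  rw [h1, wP_neg, pairAl_neg_left]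

lemma GG_tel (k l a : ℕ) (ha : 1 ≤ a) : ∀ b, a - 1 ≤ b →
    ∑ s ∈ Icc a b, (GG A d ii k l s - GG A d ii k l (s-1))
      = GG A d ii k l b - GG A d ii k l (a-1) := by
  intro b
  induction b with
  | zero =>
    intro h
    have : a = 1 := by omega
    subst this
    simp
  | succ b ih =>
    intro h
    by_cases h2 : a - 1 = b + 1
    · rw [← h2, show Icc a (a-1) = ∅ by rw [Finset.Icc_eq_empty_iff]; omega]
      simp
    · have hb : a - 1 ≤ b := by omega
      rw [Finset.sum_Icc_succ_top (by omega : a ≤ b + 1), ih hb]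
      simp only [Nat.add_sub_cancel]
      ring

/-- STEP 2 : the Σ-evaluation -/
lemma sigma (hA : ∀ i, A i i = 2) (hsym : ∀ i j, d i * A i j = d j * A j i)
    (m k l : ℕ) (hk1 : 1 ≤ k) (hkp : kplus ii m k ≤ m) (hl1 : 1 ≤ l) (hl : l ≤ m) :
    ∑ s ∈ Icc 1 m, ((if k ≤ s ∧ s < kplus ii m k then (1:ℤ) else 0)
        + (if k < s ∧ s ≤ kplus ii m k then 1 else 0))
        * ((d (ii s) * A (ii s) (ii k)) * (if s ≤ l then gg A ii s l else 0))
      = if k = l then 2 * d (ii k) else 0 := by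
  have hkm : k ≤ m := by
    rcases kplus_mem ii m k with h' | h'
    · simp only [Set.mem_setOf_eq] at h'; omega
    · simp only [Set.mem_singleton_iff] at h'; omega
  set p := kplus ii m k with hpdef
  have hkp2 : k < p := kplus_gt ii m k hkm
  have hpii : ii p = ii k := kplus_ii ii m k hkp
  -- rewrite the summand
  have hsummand : ∀ s ∈ Icc 1 m,
      ((if k ≤ s ∧ s < p then (1:ℤ) else 0) + (if k < s ∧ s ≤ p then 1 else 0))
        * ((d (ii s) * A (ii s) (ii k)) * (if s ≤ l then gg A ii s l else 0))
      = (if k ≤ s ∧ s < p ∧ s ≤ l then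
          (GG A d ii k l s - GG A d ii k l (s-1)) else 0)
        + (if k < s ∧ s ≤ p ∧ s ≤ l then
          (GG A d ii k l s - GG A d ii k l (s-1)) else 0) := by
    intro s hsmem
    simp only [Finset.mem_Icc] at hsmem
    have hD : (d (ii s) * A (ii s) (ii k)) * gg A ii s l
        = GG A d ii k l s - GG A d ii k l (s-1) :=
      (GG_diff A d ii hA hsym k l s (by omega)).symm
    split_ifs <;> try omega
    all_goals try rw [← hD]
    all_goals ring
  rw [Finset.sum_congr rfl hsummand, Finset.sum_add_distrib]
  have hfil1 : ∀ (c : ℤ) (hc : True), True := fun _ _ => trivial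
  -- first sum
  have h1 : ∑ s ∈ Icc 1 m, (if k ≤ s ∧ s < p ∧ s ≤ l then
      (GG A d ii k l s - GG A d ii k l (s-1)) else 0)
      = ∑ s ∈ Icc k (min l (p-1)), (GG A d ii k l s - GG A d ii k l (s-1)) := by
    rw [← Finset.sum_filter]
    refine Finset.sum_congr ?_ (fun _ _ => rfl)
    ext s
    simp only [Finset.mem_filter, Finset.mem_Icc]
    omega
  have h2 : ∑ s ∈ Icc 1 m, (if k < s ∧ s ≤ p ∧ s ≤ l then
      (GG A d ii k l s - GG A d ii k l (s-1)) else 0)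
      = ∑ s ∈ Icc (k+1) (min l p), (GG A d ii k l s - GG A d ii k l (s-1)) := by
    rw [← Finset.sum_filter]
    refine Finset.sum_congr ?_ (fun _ _ => rfl)
    ext s
    simp only [Finset.mem_filter, Finset.mem_Icc]
    omega
  rw [h1, h2]
  rcases lt_trichotomy l k with hlk | hlk | hlk
  · -- l < k
    rw [show Icc k (min l (p-1)) = ∅ by rw [Finset.Icc_eq_empty_iff]; omega,
      show Icc (k+1) (min l p) = ∅ by rw [Finset.Icc_eq_empty_iff]; omega]
    rw [if_neg (by omega : ¬ k = l)]
    simp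
  · -- l = k
    subst hlk
    rw [show min l (p-1) = l by omega, show min l p = l by omega]
    rw [GG_tel A d ii l l l (by omega) l (by omega),
      GG_tel A d ii l l (l+1) (by omega) l (by omega)]
    simp only [Nat.add_sub_cancel]
    have hflip : GG A d ii l l l = -GG A d ii l l (l-1) :=
      GG_flip A d ii hA l l l (by omega) rfl
    have hval : GG A d ii l l l = d (ii l) := by
      unfold GG
      rw [pairAl_wInv A d ii hA hsym l _ _ rfl, pairAl_alP_omP, if_pos rfl]
      ring
    have hmm : GG A d ii l l (l-1) = -d (ii l) := by rw [← hval, hflip]; ring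
    rw [hval, hmm]
    simp only [eq_self_iff_true, if_true]
    ring
  · -- k < l
    rcases lt_or_ge l p with hlp | hlp
    · -- k < l < p
      rw [show min l (p-1) = l by omega, show min l p = l by omega]
      rw [GG_tel A d ii k l k (by omega) l (by omega),
        GG_tel A d ii k l (k+1) (by omega) l (by omega)]
      simp only [Nat.add_sub_cancel]
      have hflip : GG A d ii k l k = -GG A d ii k l (k-1) :=
        GG_flip A d ii hA k l k (by omega) rfl
      have hval : GG A d ii k l l = 0 := by
        unfold GG
        rw [pairAl_wInv A d ii hA hsym l _ _ rfl, pairAl_alP_omP]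
        have hne : ii l ≠ ii k := by
          intro h
          have := kplus_le_of ii m k l hlk hl h
          omega
        rw [if_neg hne]
        ring
      rw [if_neg (by omega : ¬ k = l), hval, hflip]
      ring
    · -- p ≤ l
      rw [show min l (p-1) = p-1 by omega, show min l p = p by omega]
      rw [GG_tel A d ii k l k (by omega) (p-1) (by omega),
        GG_tel A d ii k l (k+1) (by omega) p (by omega)]
      simp only [Nat.add_sub_cancel]
      have hflip1 : GG A d ii k l k = -GG A d ii k l (k-1) :=
        GG_flip A d ii hA k l k (by omega) rfl
      have hflip2 : GG A d ii k l p = -GG A d ii k l (p-1) :=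
        GG_flip A d ii hA k l p (by omega) hpii
      rw [if_neg (by omega : ¬ k = l), hflip1, hflip2]
      ring

end CompatProof

namespace CompatProof
open Finset

variable {n : ℕ} (A : Fin n → Fin n → ℤ) (d : Fin n → ℤ) (ii : ℕ → Fin n)

lemma bcoef_eq (m pp k : ℕ) (hpp1 : 1 ≤ pp) (hk1 : 1 ≤ k)
    (hkp : kplus ii m k ≤ m) (hkm : k ≤ m) :
    bcoef A ii m pp k
      = ((if pp = kplus ii m k then (1:ℤ) else 0)
          + (if pp = kminus ii (kplus ii m k) then 1 else 0)
          + (if pp < kplus ii m k ∧ kplus ii m k < kplus ii m pp then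
              A (ii pp) (ii (kplus ii m k)) else 0))
        - ((if pp = k then 1 else 0) + (if pp = kminus ii k then 1 else 0)
          + (if pp < k ∧ k < kplus ii m pp then A (ii pp) (ii k) else 0)) := by
  have hkP : k < kplus ii m k := kplus_gt ii m k hkm
  have hKmlt : kminus ii k < k := kminus_lt ii k hk1
  have hPmin : kminus ii (kplus ii m k) = k := plus_minus ii m k hk1 hkp
  have hiP : ii (kplus ii m k) = ii k := kplus_ii ii m k hkp
  rw [hPmin, hiP]
  unfold bcoef
  by_cases h1 : pp = kminus ii k
  · have h1' : 1 ≤ kminus ii k := by omega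
    have hc : kplus ii m (kminus ii k) = k := minus_plus ii m k h1' hkm
    rw [if_pos h1]
    subst h1
    rw [hc]
    split_ifs <;> (try omega) <;> ring
  · by_cases h0 : pp = k
    · subst h0
      rw [if_neg h1]
      split_ifs <;> (try omega) <;> ring
    · by_cases hpk : pp < k
      · have hcc : kplus ii m pp ≠ kplus ii m k := by
          intro heq
          have hppm : kplus ii m pp ≤ m := by omega
          have e1 := kplus_ii ii m pp hppm
          rw [heq] at e1
          have e2 := kplus_ii ii m k hkp
          have hiipp : ii pp = ii k := e1.symm.trans e2
          have := kplus_le_of ii m pp k hpk hkm hiipp.symm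
          omega
        rw [if_neg h1]
        split_ifs <;> (try omega) <;> ring
      · rw [if_neg h1]
        split_ifs <;> (try omega) <;> ring

lemma fin_sum_to_Icc (m : ℕ) (f : ℕ → ℤ) :
    ∑ q : Fin m, f ((q:ℕ)+1) = ∑ l ∈ Icc 1 m, f l := by
  rw [Fin.sum_univ_eq_sum_range (fun q => f (q+1)) m]
  rw [← Finset.Ico_add_one_right_eq_Icc, Finset.sum_Ico_eq_sum_range]
  refine Finset.sum_congr (by rw [Nat.add_sub_cancel]) fun i _ => by rw [Nat.add_comm]

lemma phiE'_apply (m l : ℕ) (s : Fin m) :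
    phiE' A ii m l s
      = -(if (s:ℕ)+1 ≤ l then gg A ii ((s:ℕ)+1) l else 0) := by
  unfold phiE' gg
  simp only [Pi.neg_apply, Finset.sum_apply, Pi.smul_apply, smul_eq_mul, eps]
  congr 1
  refine (Finset.sum_eq_single s ?_ ?_).trans ?_
  · intro b _ hb
    have hne : ¬ ((s:ℕ)+1 = (b:ℕ)+1) :=
      fun h => hb (Fin.ext (show (b:ℕ) = (s:ℕ) by omega))
    rw [if_neg hne, mul_zero]
  · intro h
    exact absurd (Finset.mem_univ s) h
  · rw [if_pos rfl, mul_one]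

lemma phiMap'_apply (m : ℕ) (v : Fin m → ℤ) (s : Fin m) :
    phiMap' A ii m v s = ∑ q : Fin m, v q * (phiE' A ii m ((q:ℕ)+1) s) := by
  unfold phiMap'
  simp only [Finset.sum_apply, Pi.smul_apply, smul_eq_mul]

lemma phiMap'_eps (m l : ℕ) (hl1 : 1 ≤ l) (hl : l ≤ m) (s : Fin m) :
    phiMap' A ii m (eps m l) s = phiE' A ii m l s := by
  rw [phiMap'_apply]
  have hlm : l - 1 < m := by omega
  refine (Finset.sum_eq_single (⟨l-1, hlm⟩ : Fin m) ?_ ?_).trans ?_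
  · intro b _ hb
    have hne : ¬ ((b:ℕ)+1 = l) := by
      intro h
      exact hb (Fin.ext (show (b:ℕ) = ((⟨l-1, hlm⟩ : Fin m):ℕ) by
        simp only [Fin.val_mk]; omega))
    simp only [eps]
    rw [if_neg hne, zero_mul]
  · intro h
    exact absurd (Finset.mem_univ _) h
  · simp only [eps]
    have h1 : ((⟨l-1, hlm⟩ : Fin m) : ℕ) + 1 = l := by
      simp only [Fin.val_mk]; omega
    rw [h1, if_pos rfl, one_mul]

/-- STEP 1 : `φ'(𝐛^k) = ε_k - ε_{k⁺}` -/
lemma phiMap'_bvec (hA : ∀ i, A i i = 2) (m k : ℕ) (hk1 : 1 ≤ k)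
    (hk2 : kplus ii m k ≤ m) :
    phiMap' A ii m (bvec A ii m k) = eps m k - eps m (kplus ii m k) := by
  have hkm : k ≤ m := by
    rcases kplus_mem ii m k with h' | h'
    · simp only [Set.mem_setOf_eq] at h'; omega
    · simp only [Set.mem_singleton_iff] at h'; omega
  funext s
  have hsm : (s:ℕ) < m := s.isLt
  have hP1 : k < kplus ii m k := kplus_gt ii m k hkm
  rw [phiMap'_apply]
  have hterm : ∀ q : Fin m, bvec A ii m k q * phiE' A ii m ((q:ℕ)+1) s
      = (fun l => ((if l = k then (1:ℤ) else 0) + (if l = kminus ii k then 1 else 0)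
          + (if l < k ∧ k < kplus ii m l then A (ii l) (ii k) else 0))
          * (if (s:ℕ)+1 ≤ l then gg A ii ((s:ℕ)+1) l else 0)
        - ((if l = kplus ii m k then (1:ℤ) else 0)
          + (if l = kminus ii (kplus ii m k) then 1 else 0)
          + (if l < kplus ii m k ∧ kplus ii m k < kplus ii m l then
              A (ii l) (ii (kplus ii m k)) else 0))
          * (if (s:ℕ)+1 ≤ l then gg A ii ((s:ℕ)+1) l else 0)) ((q:ℕ)+1) := by
    intro q
    show bvec A ii m k q * phiE' A ii m ((q:ℕ)+1) s = ((if ((q:ℕ)+1) = k then (1:ℤ) else 0) + (if ((q:ℕ)+1) = kminus ii k then 1 else 0)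
          + (if ((q:ℕ)+1) < k ∧ k < kplus ii m ((q:ℕ)+1) then A (ii ((q:ℕ)+1)) (ii k) else 0))
          * (if (s:ℕ)+1 ≤ ((q:ℕ)+1) then gg A ii ((s:ℕ)+1) ((q:ℕ)+1) else 0)
        - ((if ((q:ℕ)+1) = kplus ii m k then (1:ℤ) else 0)
          + (if ((q:ℕ)+1) = kminus ii (kplus ii m k) then 1 else 0)
          + (if ((q:ℕ)+1) < kplus ii m k ∧ kplus ii m k < kplus ii m ((q:ℕ)+1) then
              A (ii ((q:ℕ)+1)) (ii (kplus ii m k)) else 0))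
          * (if (s:ℕ)+1 ≤ ((q:ℕ)+1) then gg A ii ((s:ℕ)+1) ((q:ℕ)+1) else 0)
    rw [phiE'_apply]
    unfold bvec
    rw [bcoef_eq A ii m ((q:ℕ)+1) k (by omega) hk1 hk2 hkm]
    ring
  rw [Finset.sum_congr rfl (fun q _ => hterm q)]
  rw [fin_sum_to_Icc m (fun l => ((if l = k then (1:ℤ) else 0) + (if l = kminus ii k then 1 else 0)
          + (if l < k ∧ k < kplus ii m l then A (ii l) (ii k) else 0))
          * (if (s:ℕ)+1 ≤ l then gg A ii ((s:ℕ)+1) l else 0)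
        - ((if l = kplus ii m k then (1:ℤ) else 0)
          + (if l = kminus ii (kplus ii m k) then 1 else 0)
          + (if l < kplus ii m k ∧ kplus ii m k < kplus ii m l then
              A (ii l) (ii (kplus ii m k)) else 0))
          * (if (s:ℕ)+1 ≤ l then gg A ii ((s:ℕ)+1) l else 0))]
  have hred : ∑ l ∈ Icc 1 m, (fun l => ((if l = k then (1:ℤ) else 0) + (if l = kminus ii k then 1 else 0)
          + (if l < k ∧ k < kplus ii m l then A (ii l) (ii k) else 0))
          * (if (s:ℕ)+1 ≤ l then gg A ii ((s:ℕ)+1) l else 0)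
        - ((if l = kplus ii m k then (1:ℤ) else 0)
          + (if l = kminus ii (kplus ii m k) then 1 else 0)
          + (if l < kplus ii m k ∧ kplus ii m k < kplus ii m l then
              A (ii l) (ii (kplus ii m k)) else 0))
          * (if (s:ℕ)+1 ≤ l then gg A ii ((s:ℕ)+1) l else 0)) l
      = ∑ l ∈ Icc 1 m, (((if l = k then (1:ℤ) else 0) + (if l = kminus ii k then 1 else 0)
          + (if l < k ∧ k < kplus ii m l then A (ii l) (ii k) else 0))
          * (if (s:ℕ)+1 ≤ l then gg A ii ((s:ℕ)+1) l else 0)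
        - ((if l = kplus ii m k then (1:ℤ) else 0)
          + (if l = kminus ii (kplus ii m k) then 1 else 0)
          + (if l < kplus ii m k ∧ kplus ii m k < kplus ii m l then
              A (ii l) (ii (kplus ii m k)) else 0))
          * (if (s:ℕ)+1 ≤ l then gg A ii ((s:ℕ)+1) l else 0)) := Finset.sum_congr rfl (fun l _ => rfl)
  rw [hred, Finset.sum_sub_distrib]
  rw [star A ii hA m k ((s:ℕ)+1) hk1 hkm (by omega) (by omega),
    star A ii hA m (kplus ii m k) ((s:ℕ)+1) (by omega) hk2 (by omega) (by omega)]
  simp only [Pi.sub_apply, eps]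

end CompatProof

namespace CompatProof
open Finset

variable {n : ℕ} (A : Fin n → Fin n → ℤ) (d : Fin n → ℤ) (ii : ℕ → Fin n)

lemma eps_collapse (m K : ℕ) (hK1 : 1 ≤ K) (hK : K - 1 < m) (R : Fin m → ℤ) :
    ∑ p : Fin m, eps m K p * R p = R ⟨K-1, hK⟩ := by
  refine (Finset.sum_eq_single (⟨K-1, hK⟩ : Fin m) ?_ ?_).trans ?_
  · intro b _ hb
    have hne : ¬ ((b:ℕ)+1 = K) := fun hcon =>
      hb (Fin.ext (show (b:ℕ) = ((⟨K-1, hK⟩ : Fin m):ℕ) by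
        simp only [Fin.val_mk]; omega))
    unfold eps
    rw [if_neg hne, zero_mul]
  · exact fun h => absurd (Finset.mem_univ _) h
  · unfold eps
    rw [if_pos (show ((⟨K-1, hK⟩ : Fin m):ℕ)+1 = K by simp only [Fin.val_mk]; omega),
      one_mul]

lemma chi_eq (k kp q : ℕ) (hk1 : 1 ≤ k) (hkkp : k < kp) :
    ((↑(k-1) : ℤ) - ↑q).sign - ((↑(kp-1) : ℤ) - ↑q).sign
      = -((if k ≤ q+1 ∧ q+1 < kp then (1:ℤ) else 0)
          + (if k < q+1 ∧ q+1 ≤ kp then 1 else 0)) := by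
  have e1 : (↑(k-1) : ℤ) - ↑q = ↑k - (↑q + 1) := by omega
  have e2 : (↑(kp-1) : ℤ) - ↑q = ↑kp - (↑q + 1) := by omega
  rw [e1, e2]
  rcases lt_trichotomy (q+1) k with h | h | h
  · rw [Int.sign_eq_one_of_pos (show (0:ℤ) < ↑k - (↑q+1) by omega),
      Int.sign_eq_one_of_pos (show (0:ℤ) < ↑kp - (↑q+1) by omega),
      if_neg (show ¬(k ≤ q+1 ∧ q+1 < kp) by omega),
      if_neg (show ¬(k < q+1 ∧ q+1 ≤ kp) by omega)]
    norm_num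
  · rw [show ((k:ℤ) - (↑q+1)) = 0 from by omega, Int.sign_zero,
      Int.sign_eq_one_of_pos (show (0:ℤ) < ↑kp - (↑q+1) by omega),
      if_pos (show k ≤ q+1 ∧ q+1 < kp by omega),
      if_neg (show ¬(k < q+1 ∧ q+1 ≤ kp) by omega)]
    norm_num
  · rcases lt_trichotomy (q+1) kp with h2 | h2 | h2
    · rw [Int.sign_eq_neg_one_of_neg (show (k:ℤ) - (↑q+1) < 0 by omega),
        Int.sign_eq_one_of_pos (show (0:ℤ) < ↑kp - (↑q+1) by omega),
        if_pos (show k ≤ q+1 ∧ q+1 < kp by omega),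
        if_pos (show k < q+1 ∧ q+1 ≤ kp by omega)]
      norm_num
    · rw [Int.sign_eq_neg_one_of_neg (show (k:ℤ) - (↑q+1) < 0 by omega),
        show ((kp:ℤ) - (↑q+1)) = 0 from by omega, Int.sign_zero,
        if_neg (show ¬(k ≤ q+1 ∧ q+1 < kp) by omega),
        if_pos (show k < q+1 ∧ q+1 ≤ kp by omega)]
      norm_num
    · rw [Int.sign_eq_neg_one_of_neg (show (k:ℤ) - (↑q+1) < 0 by omega),
        Int.sign_eq_neg_one_of_neg (show (kp:ℤ) - (↑q+1) < 0 by omega),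
        if_neg (show ¬(k ≤ q+1 ∧ q+1 < kp) by omega),
        if_neg (show ¬(k < q+1 ∧ q+1 ≤ kp) by omega)]
      norm_num

end CompatProof

open CompatProof in
theorem Lambda_compat' {n m : ℕ} (hm : 1 ≤ m)
    (A : Fin n → Fin n → ℤ) (d : Fin n → ℤ)
    (hA : ∀ i, A i i = 2) (hd : ∀ i, 0 < d i)
    (hsym : ∀ i j, d i * A i j = d j * A j i)
    (ii : ℕ → Fin n)
    (k : ℕ) (hk1 : 1 ≤ k) (hk2 : kplus ii m k ≤ m)
    (l : ℕ) (hl1 : 1 ≤ l) (hl2 : l ≤ m) :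
    LamF A d ii m (phiMap' A ii m (bvec A ii m k)) (phiMap' A ii m (eps m l)) =
      2 * d (ii k) * (if k = l then 1 else 0) := by
  have hkm : k ≤ m := by
    rcases kplus_mem ii m k with h' | h'
    · simp only [Set.mem_setOf_eq] at h'; omega
    · simp only [Set.mem_singleton_iff] at h'; omega
  have hkP : k < kplus ii m k := kplus_gt ii m k hkm
  have hiP : ii (kplus ii m k) = ii k := kplus_ii ii m k hk2
  have hh1 : k - 1 < m := by omega
  have hh2 : kplus ii m k - 1 < m := by omega
  rw [phiMap'_bvec A ii hA m k hk1 hk2]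
  have hv : ∀ q : Fin m, phiMap' A ii m (eps m l) q
      = -(if (q:ℕ)+1 ≤ l then gg A ii ((q:ℕ)+1) l else 0) := fun q => by
    rw [phiMap'_eps A ii m l hl1 hl2 q, phiE'_apply]
  have hsplit : LamF A d ii m (eps m k - eps m (kplus ii m k)) (phiMap' A ii m (eps m l))
      = (∑ p : Fin m, eps m k p * (fun pp : Fin m => ∑ q : Fin m, phiMap' A ii m (eps m l) q *
      ((((pp:ℕ):ℤ) - ((q:ℕ):ℤ)).sign * (d (ii ((pp:ℕ)+1)) * A (ii ((pp:ℕ)+1)) (ii ((q:ℕ)+1))))) p)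
        - (∑ p : Fin m, eps m (kplus ii m k) p * (fun pp : Fin m => ∑ q : Fin m, phiMap' A ii m (eps m l) q *
      ((((pp:ℕ):ℤ) - ((q:ℕ):ℤ)).sign * (d (ii ((pp:ℕ)+1)) * A (ii ((pp:ℕ)+1)) (ii ((q:ℕ)+1))))) p) := by
    unfold LamF
    rw [← Finset.sum_sub_distrib]
    refine Finset.sum_congr rfl fun p _ => ?_
    show ∑ q : Fin m, (eps m k - eps m (kplus ii m k)) p * phiMap' A ii m (eps m l) q *
        ((((p:ℕ):ℤ) - ((q:ℕ):ℤ)).sign * (d (ii ((p:ℕ)+1)) * A (ii ((p:ℕ)+1)) (ii ((q:ℕ)+1))))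
      = eps m k p * (∑ q : Fin m, phiMap' A ii m (eps m l) q * ((((p:ℕ):ℤ) - ((q:ℕ):ℤ)).sign * (d (ii ((p:ℕ)+1)) * A (ii ((p:ℕ)+1)) (ii ((q:ℕ)+1)))))
        - eps m (kplus ii m k) p * (∑ q : Fin m, phiMap' A ii m (eps m l) q * ((((p:ℕ):ℤ) - ((q:ℕ):ℤ)).sign * (d (ii ((p:ℕ)+1)) * A (ii ((p:ℕ)+1)) (ii ((q:ℕ)+1)))))
    rw [Finset.mul_sum, Finset.mul_sum, ← Finset.sum_sub_distrib]
    refine Finset.sum_congr rfl fun q _ => ?_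
    simp only [Pi.sub_apply]
    ring
  rw [hsplit, eps_collapse m k hk1 hh1 (fun pp : Fin m => ∑ q : Fin m, phiMap' A ii m (eps m l) q *
      ((((pp:ℕ):ℤ) - ((q:ℕ):ℤ)).sign * (d (ii ((pp:ℕ)+1)) * A (ii ((pp:ℕ)+1)) (ii ((q:ℕ)+1))))),
    eps_collapse m (kplus ii m k) (by omega) hh2 (fun pp : Fin m => ∑ q : Fin m, phiMap' A ii m (eps m l) q *
      ((((pp:ℕ):ℤ) - ((q:ℕ):ℤ)).sign * (d (ii ((pp:ℕ)+1)) * A (ii ((pp:ℕ)+1)) (ii ((q:ℕ)+1)))))]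
  show (∑ q : Fin m, phiMap' A ii m (eps m l) q * ((((((⟨k-1, hh1⟩ : Fin m)):ℕ):ℤ) - ((q:ℕ):ℤ)).sign * (d (ii (((⟨k-1, hh1⟩ : Fin m):ℕ)+1)) * A (ii (((⟨k-1, hh1⟩ : Fin m):ℕ)+1)) (ii ((q:ℕ)+1)))))
      - (∑ q : Fin m, phiMap' A ii m (eps m l) q * ((((((⟨kplus ii m k - 1, hh2⟩ : Fin m)):ℕ):ℤ) - ((q:ℕ):ℤ)).sign * (d (ii (((⟨kplus ii m k - 1, hh2⟩ : Fin m):ℕ)+1)) * A (ii (((⟨kplus ii m k - 1, hh2⟩ : Fin m):ℕ)+1)) (ii ((q:ℕ)+1))))) = _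
  rw [← Finset.sum_sub_distrib]
  have hqeq : ∀ q : Fin m,
      phiMap' A ii m (eps m l) q * ((((((⟨k-1, hh1⟩ : Fin m)):ℕ):ℤ) - ((q:ℕ):ℤ)).sign * (d (ii (((⟨k-1, hh1⟩ : Fin m):ℕ)+1)) * A (ii (((⟨k-1, hh1⟩ : Fin m):ℕ)+1)) (ii ((q:ℕ)+1)))) - phiMap' A ii m (eps m l) q * ((((((⟨kplus ii m k - 1, hh2⟩ : Fin m)):ℕ):ℤ) - ((q:ℕ):ℤ)).sign * (d (ii (((⟨kplus ii m k - 1, hh2⟩ : Fin m):ℕ)+1)) * A (ii (((⟨kplus ii m k - 1, hh2⟩ : Fin m):ℕ)+1)) (ii ((q:ℕ)+1))))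
      = (fun sv => ((if k ≤ sv ∧ sv < kplus ii m k then (1:ℤ) else 0)
      + (if k < sv ∧ sv ≤ kplus ii m k then 1 else 0))
      * ((d (ii sv) * A (ii sv) (ii k)) * (if sv ≤ l then gg A ii sv l else 0))) ((q:ℕ)+1) := by
    intro q
    show phiMap' A ii m (eps m l) q * ((((((⟨k-1, hh1⟩ : Fin m)):ℕ):ℤ) - ((q:ℕ):ℤ)).sign * (d (ii (((⟨k-1, hh1⟩ : Fin m):ℕ)+1)) * A (ii (((⟨k-1, hh1⟩ : Fin m):ℕ)+1)) (ii ((q:ℕ)+1)))) - phiMap' A ii m (eps m l) q * ((((((⟨kplus ii m k - 1, hh2⟩ : Fin m)):ℕ):ℤ) - ((q:ℕ):ℤ)).sign * (d (ii (((⟨kplus ii m k - 1, hh2⟩ : Fin m):ℕ)+1)) * A (ii (((⟨kplus ii m k - 1, hh2⟩ : Fin m):ℕ)+1)) (ii ((q:ℕ)+1))))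
      = ((if k ≤ ((q:ℕ)+1) ∧ ((q:ℕ)+1) < kplus ii m k then (1:ℤ) else 0)
      + (if k < ((q:ℕ)+1) ∧ ((q:ℕ)+1) ≤ kplus ii m k then 1 else 0))
      * ((d (ii ((q:ℕ)+1)) * A (ii ((q:ℕ)+1)) (ii k)) * (if ((q:ℕ)+1) ≤ l then gg A ii ((q:ℕ)+1) l else 0))
    rw [hv q]
    simp only [Fin.val_mk]
    rw [Nat.sub_add_cancel hk1, Nat.sub_add_cancel (show 1 ≤ kplus ii m k by omega), hiP]
    have hsign := chi_eq k (kplus ii m k) (q:ℕ) hk1 hkP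
    have hC := hsym (ii k) (ii ((q:ℕ)+1))
    rw [hC]
    linear_combination (-(if (q:ℕ)+1 ≤ l then gg A ii ((q:ℕ)+1) l else 0) *
      (d (ii ((q:ℕ)+1)) * A (ii ((q:ℕ)+1)) (ii k))) * hsign
  rw [Finset.sum_congr rfl (fun q _ => hqeq q)]
  rw [fin_sum_to_Icc m (fun sv => ((if k ≤ sv ∧ sv < kplus ii m k then (1:ℤ) else 0)
      + (if k < sv ∧ sv ≤ kplus ii m k then 1 else 0))
      * ((d (ii sv) * A (ii sv) (ii k)) * (if sv ≤ l then gg A ii sv l else 0)))]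
  rw [show (∑ sv ∈ Icc 1 m, (fun sv => ((if k ≤ sv ∧ sv < kplus ii m k then (1:ℤ) else 0)
      + (if k < sv ∧ sv ≤ kplus ii m k then 1 else 0))
      * ((d (ii sv) * A (ii sv) (ii k)) * (if sv ≤ l then gg A ii sv l else 0))) sv) = ∑ sv ∈ Icc 1 m, ((if k ≤ sv ∧ sv < kplus ii m k then (1:ℤ) else 0)
      + (if k < sv ∧ sv ≤ kplus ii m k then 1 else 0))
      * ((d (ii sv) * A (ii sv) (ii k)) * (if sv ≤ l then gg A ii sv l else 0)) from
    Finset.sum_congr rfl (fun sv _ => rfl)]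
  rw [sigma A d ii hA hsym m k l hk1 hk2 hl1 hl2]
  split_ifs <;> ring


/-- compatibility of the pair `(Λ_𝐢, B̃_𝐢)`:
`Λ_𝐢(φ'_𝐢(𝐛^k), φ'_𝐢(ε_ℓ)) = 2 d_{i_k} δ_{kℓ}` for `k ∈ 𝐞𝐱`, `1 ≤ ℓ ≤ m`. -/
theorem Lambda_compat {n m : ℕ} (hm : 1 ≤ m)
    (A : Fin n → Fin n → ℤ) (d : Fin n → ℤ)
    (hA : ∀ i, A i i = 2) (hd : ∀ i, 0 < d i)
    (hsym : ∀ i j, d i * A i j = d j * A j i)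
    (ii : ℕ → Fin n)
    (k : ℕ) (hk1 : 1 ≤ k) (hk2 : kplus ii m k ≤ m)
    (l : ℕ) (hl1 : 1 ≤ l) (hl2 : l ≤ m) :
    LamF A d ii m (phiMap' A ii m (bvec A ii m k)) (phiMap' A ii m (eps m l)) =
      2 * d (ii k) * (if k = l then 1 else 0) := by
  exact Lambda_compat' hm A d hA hd hsym ii k hk1 hk2 l hl1 hl2
end
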